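/- arXiv:2108.00140 — 3 statements merged into one kernel-verified Lean document; each statement's English description precedes it below -/
import Mathlib

section
/- An R-module M is strongly Gorenstein (L,A)-projective if and only if there exists a short exact sequence 0 → M → P → M → 0 with P projective and Ext¹_R(M, L) = 0 for all L ∈ 𝓛; moreover this is equivalent to the same condition with Extⁱ_R(M, L) = 0 for all i ≥ 1. -/
open CategoryTheory CategoryTheory.Limits DirectSum

namespace DualityPaper

variable {R : Type} [Ring R]

/-- The right `R`-module structure on the group of additive maps out of a left `R`-module,
given by `(f • r) m = f (r • m)`. -/
instance charModuleRight (M A : Type) [AddCommGroup M] [AddCommGroup A] [Module R M] :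
    Module Rᵐᵒᵖ (M →+ A) where
  smul r f := f.comp (DistribMulAction.toAddMonoidHom M r.unop)
  one_smul f := AddMonoidHom.ext fun m => by
    show f ((1 : Rᵐᵒᵖ).unop • m) = f m
    simp
  mul_smul r s f := AddMonoidHom.ext fun m => by
    show f ((r * s).unop • m) = f (s.unop • r.unop • m)
    rw [MulOpposite.unop_mul, mul_smul]
  smul_zero r := rfl
  smul_add r f g := rfl
  add_smul r s f := AddMonoidHom.ext fun m => by
    show f ((r + s).unop • m) = f (r.unop • m) + f (s.unop • m)
    rw [MulOpposite.unop_add, add_smul, map_add]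
  zero_smul f := AddMonoidHom.ext fun m => by
    show f ((0 : Rᵐᵒᵖ).unop • m) = 0
    simp

/-- The left `R`-module structure on the group of additive maps out of a right `R`-module. -/
instance charModuleLeft (N A : Type) [AddCommGroup N] [AddCommGroup A] [Module Rᵐᵒᵖ N] :
    Module R (N →+ A) where
  smul r f := f.comp (DistribMulAction.toAddMonoidHom N (MulOpposite.op r))
  one_smul f := AddMonoidHom.ext fun m => by
    show f ((MulOpposite.op (1 : R)) • m) = f m
    simp
  mul_smul r s f := AddMonoidHom.ext fun m => by
    show f (MulOpposite.op (r * s) • m) = f (MulOpposite.op s • MulOpposite.op r • m)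
    rw [MulOpposite.op_mul, mul_smul]
  smul_zero r := rfl
  smul_add r f g := rfl
  add_smul r s f := AddMonoidHom.ext fun m => by
    show f (MulOpposite.op (r + s) • m) = f (MulOpposite.op r • m) + f (MulOpposite.op s • m)
    rw [MulOpposite.op_add, add_smul, map_add]
  zero_smul f := AddMonoidHom.ext fun m => by
    show f (MulOpposite.op (0 : R) • m) = 0
    simp

/-- The character module `M⁺ = Hom_ℤ(M, ℚ/ℤ)` of a left module, as a right module. -/
def charL (M : ModuleCat.{0} R) : ModuleCat.{0} Rᵐᵒᵖ :=
  ModuleCat.of Rᵐᵒᵖ (M →+ AddCircle (1 : ℚ))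

/-- The character module `N⁺ = Hom_ℤ(N, ℚ/ℤ)` of a right module, as a left module. -/
def charR (N : ModuleCat.{0} Rᵐᵒᵖ) : ModuleCat.{0} R :=
  ModuleCat.of R (N →+ AddCircle (1 : ℚ))

/-- A left module over a (possibly noncommutative) ring is flat iff its character module is an
injective right module (Lambek); we take this as the definition of flatness. -/
def IsFlatMod (M : ModuleCat.{0} R) : Prop := CategoryTheory.Injective (charL M)

/-- `f`, `g` form a short exact sequence `0 → A → B → C → 0`. -/
def SES {A B C : ModuleCat.{0} R} (f : A ⟶ B) (g : B ⟶ C) : Prop :=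
  ∃ w : f ≫ g = 0, (ShortComplex.mk f g w).ShortExact

/-- Vanishing of `Ext^n_R(M, N)`. -/
def ExtVanish (n : ℕ) (M N : ModuleCat.{0} R) : Prop :=
  Subsingleton (((_root_.Ext ℤ (ModuleCat.{0} R) n).obj (Opposite.op M)).obj N)

/-- A complete duality pair `(𝓛, 𝓐)` over `R`. -/
structure CompleteDualityPair (𝓛 : Set (ModuleCat.{0} R)) (𝓐 : Set (ModuleCat.{0} Rᵐᵒᵖ)) :
    Prop where
  isoClosed_L : ∀ {M N : ModuleCat.{0} R}, (M ≅ N) → M ∈ 𝓛 → N ∈ 𝓛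
  isoClosed_A : ∀ {M N : ModuleCat.{0} Rᵐᵒᵖ}, (M ≅ N) → M ∈ 𝓐 → N ∈ 𝓐
  char_mem_iff : ∀ M : ModuleCat.{0} R, M ∈ 𝓛 ↔ charL M ∈ 𝓐
  char_mem_iff' : ∀ N : ModuleCat.{0} Rᵐᵒᵖ, N ∈ 𝓐 ↔ charR N ∈ 𝓛
  summands_A : ∀ A ∈ 𝓐, ∀ (B : ModuleCat.{0} Rᵐᵒᵖ) (i : B ⟶ A) (p : A ⟶ B),
    i ≫ p = 𝟙 B → B ∈ 𝓐
  sums_A : ∀ A B : ModuleCat.{0} Rᵐᵒᵖ, A ∈ 𝓐 → B ∈ 𝓐 → ModuleCat.of Rᵐᵒᵖ (A × B) ∈ 𝓐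
  summands_L : ∀ L ∈ 𝓛, ∀ (K : ModuleCat.{0} R) (i : K ⟶ L) (p : L ⟶ K),
    i ≫ p = 𝟙 K → K ∈ 𝓛
  sums_L : ∀ L K : ModuleCat.{0} R, L ∈ 𝓛 → K ∈ 𝓛 → ModuleCat.of R (L × K) ∈ 𝓛
  self_mem : ModuleCat.of R R ∈ 𝓛
  coprod_L : ∀ (ι : Type) (f : ι → ModuleCat.{0} R), (∀ i, f i ∈ 𝓛) →
    ModuleCat.of R (⨁ i, f i) ∈ 𝓛
  ext_L : ∀ {A B C : ModuleCat.{0} R} (f : A ⟶ B) (g : B ⟶ C),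
    SES f g → A ∈ 𝓛 → C ∈ 𝓛 → B ∈ 𝓛

/-- A doubly infinite exact sequence of projectives which stays exact after applying
`Hom_R(-, T)` for every `T` in the class `𝓣`. -/
structure IsTotallyAcyclicWrt (𝓣 : Set (ModuleCat.{0} R))
    (C : ChainComplex (ModuleCat.{0} R) ℤ) : Prop where
  projective : ∀ n, Projective (C.X n)
  exact : ∀ n, (C.sc n).Exact
  homExact : ∀ T ∈ 𝓣, ∀ (n : ℤ) (g : C.X n ⟶ T), C.d (n + 1) n ≫ g = 0 →
    ∃ h : C.X (n - 1) ⟶ T, C.d n (n - 1) ≫ h = g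

/-- `M` is Gorenstein projective relative to the class `𝓣`:  it is a kernel in a
`Hom_R(-, 𝓣)`-exact exact sequence of projective modules. -/
def IsGProj (𝓣 : Set (ModuleCat.{0} R)) (M : ModuleCat.{0} R) : Prop :=
  ∃ C : ChainComplex (ModuleCat.{0} R) ℤ, IsTotallyAcyclicWrt 𝓣 C ∧
    ∃ n : ℤ, Nonempty (M ≅ kernel (C.d n (n - 1)))

/-- `M` is strongly Gorenstein `(𝓛,𝓐)`-projective. -/
def IsSGProj (𝓣 : Set (ModuleCat.{0} R)) (M : ModuleCat.{0} R) : Prop :=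
  ∃ (P : ModuleCat.{0} R) (f : P ⟶ P), Projective P ∧
    (∃ w : f ≫ f = 0, (ShortComplex.mk f f w).Exact) ∧
    (∀ T ∈ 𝓣, ∀ g : P ⟶ T, f ≫ g = 0 → ∃ h : P ⟶ T, f ≫ h = g) ∧
    Nonempty (M ≅ kernel f)

/-- Resolution dimension of `M` with respect to a class `𝓒` is at most `n`. -/
def ResDimLE (𝓒 : Set (ModuleCat.{0} R)) : ℕ → ModuleCat.{0} R → Prop
  | 0, M => M ∈ 𝓒
  | n + 1, M => ∃ (K C : ModuleCat.{0} R) (f : K ⟶ C) (g : C ⟶ M),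
      C ∈ 𝓒 ∧ SES f g ∧ ResDimLE 𝓒 n K

/-- `K` is an `n`-th kernel of an exact sequence `0 → K → C_{n-1} → ⋯ → C₀ → M → 0`
with all `Cᵢ` in `𝓒`. -/
def IsNthSyzygy (𝓒 : Set (ModuleCat.{0} R)) : ℕ → ModuleCat.{0} R → ModuleCat.{0} R → Prop
  | 0, M, K => Nonempty (K ≅ M)
  | n + 1, M, K => ∃ (S C : ModuleCat.{0} R) (f : S ⟶ C) (g : C ⟶ M),
      C ∈ 𝓒 ∧ SES f g ∧ IsNthSyzygy 𝓒 n S K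

/-- A left Frobenius pair `(𝓧, ω)`. -/
structure LeftFrobeniusPair (𝓧 ω : Set (ModuleCat.{0} R)) : Prop where
  summands_X : ∀ X ∈ 𝓧, ∀ (Y : ModuleCat.{0} R) (i : Y ⟶ X) (p : X ⟶ Y),
    i ≫ p = 𝟙 Y → Y ∈ 𝓧
  extensions_X : ∀ {A B C : ModuleCat.{0} R} (f : A ⟶ B) (g : B ⟶ C),
    SES f g → A ∈ 𝓧 → C ∈ 𝓧 → B ∈ 𝓧
  kerEpi_X : ∀ {A B C : ModuleCat.{0} R} (f : A ⟶ B) (g : B ⟶ C),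
    SES f g → B ∈ 𝓧 → C ∈ 𝓧 → A ∈ 𝓧
  subset : ω ⊆ 𝓧
  inj : ∀ X ∈ 𝓧, ∀ W ∈ ω, ∀ i : ℕ, 1 ≤ i → ExtVanish i X W
  cogen : ∀ X ∈ 𝓧, ∃ (W X' : ModuleCat.{0} R) (f : X ⟶ W) (g : W ⟶ X'),
    W ∈ ω ∧ X' ∈ 𝓧 ∧ SES f g
  summands_ω : ∀ W ∈ ω, ∀ (V : ModuleCat.{0} R) (i : V ⟶ W) (p : W ⟶ V),
    i ≫ p = 𝟙 V → V ∈ ω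



noncomputable section StrongGorenstein

open HomologicalComplex

/-- Transport `IsColimit` of a cokernel cofork along an equality of the morphisms. -/
def isColimit_cofork_of_eq {C : Type*} [Category C] [Limits.HasZeroMorphisms C] {X Y Z : C}
    {f f' : X ⟶ Y} (h : f = f') {π : Y ⟶ Z} {w : f ≫ π = 0} {w' : f' ≫ π = 0}
    (hc : IsColimit (CokernelCofork.ofπ π w)) : IsColimit (CokernelCofork.ofπ π w') := by
  subst h; exact hc

lemma subsingleton_iff_isZero {S : Type} [Ring S] (N : ModuleCat.{0} S) :
    Subsingleton N ↔ IsZero N := by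
  constructor
  · intro h; exact ModuleCat.isZero_of_subsingleton N
  · intro h
    have h0 : (𝟙 N : N ⟶ N) = 0 := h.eq_of_src _ _
    refine ⟨fun x y => ?_⟩
    calc x = (𝟙 N : N ⟶ N) x := rfl
    _ = (0 : N ⟶ N) x := by rw [h0]
    _ = (𝟙 N : N ⟶ N) y := by rw [h0]; rfl
    _ = y := rfl

/-- The key computation: if `⋯ → P → P → P → M → 0` is a periodic exact complex with `P`
projective, then for `n ≥ 1`, `Ext^n(M, L)` vanishes iff maps `P ⟶ L` killed by `F` lift. -/
lemma extVanish_iff_lift {P M : ModuleCat.{0} R}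
    (hP : Projective P) (F : P ⟶ P) (g : P ⟶ M)
    (hFF : F ≫ F = 0) (hFg : F ≫ g = 0) (hg : Epi g)
    (hmid : (ShortComplex.mk F F hFF).Exact)
    (hker : (ShortComplex.mk F g hFg).Exact)
    (n : ℕ) (L : ModuleCat.{0} R) :
    ExtVanish (n+1) M L ↔ ∀ u : P ⟶ L, F ≫ u = 0 → ∃ w : P ⟶ L, F ≫ w = u := by
  let Q : ChainComplex (ModuleCat.{0} R) ℕ :=
    ChainComplex.of (fun _ => P) (fun _ => F) (fun _ => hFF)
  have hQd : ∀ n : ℕ, Q.d (n+1) n = F := fun n => ChainComplex.of_d (fun _ => P) (fun _ => F) n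
  let π : Q ⟶ (ChainComplex.single₀ _).obj M :=
    (ChainComplex.toSingle₀Equiv Q M).symm ⟨g, by rw [hQd]; exact hFg⟩
  have hQex : ∀ k : ℕ, Q.ExactAt (k+1) := by
    intro k
    rw [HomologicalComplex.exactAt_iff' Q (k+2) (k+1) k (by simp) (by simp)]
    refine ShortComplex.exact_of_iso ?_ hmid
    exact ShortComplex.isoMk (Iso.refl _) (Iso.refl _) (Iso.refl _)
      (by simp [hQd]; exact (Category.id_comp F).trans (Category.comp_id F).symm)
      (by simp [hQd]; exact (Category.id_comp F).trans (Category.comp_id F).symm)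
  have hq1 : ∀ k : ℕ, QuasiIsoAt π (k+1) := fun k =>
    (quasiIsoAt_iff_exactAt' π (k+1) (ChainComplex.exactAt_succ_single_obj M k)).2 (hQex k)
  have hq0 : QuasiIsoAt π 0 := by
    rw [ChainComplex.quasiIsoAt₀_iff]
    let φ := (HomologicalComplex.shortComplexFunctor' (ModuleCat.{0} R) _ 1 0 0).map π
    let S₁ := Q.sc' 1 0 0
    let S₂ := (((ChainComplex.single₀ (ModuleCat.{0} R)).obj M)).sc' 1 0 0
    have hg₁ : S₁.g = 0 := Q.shape 0 0 (by simp)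
    have hf₂ : S₂.f = 0 :=
      (HomologicalComplex.isZero_single_obj_X (ComplexShape.down ℕ) 0 M 1 (by simp)).eq_of_src _ _
    have hg₂ : S₂.g = 0 := ((ChainComplex.single₀ (ModuleCat.{0} R)).obj M).shape 0 0 (by simp)
    have w₁ : S₁.f ≫ g = 0 := by rw [show S₁.f = F from hQd 0]; exact hFg
    have hc₁ : IsColimit (CokernelCofork.ofπ g w₁) :=
      isColimit_cofork_of_eq (hQd 0).symm (hker.gIsCokernel)
    have hc₂ : IsColimit (CokernelCofork.ofπ (𝟙 _) (show S₂.f ≫ 𝟙 _ = 0 by rw [hf₂, zero_comp])) :=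
      CokernelCofork.IsColimit.ofId S₂.f hf₂
    have comm : φ.τ₂ ≫ (𝟙 _ : S₂.X₂ ⟶ S₂.X₂) = (g : S₁.X₂ ⟶ M) ≫ (𝟙 M : M ⟶ S₂.X₂) := by
      simp only [Category.comp_id]
      show π.f 0 = g ≫ 𝟙 M
      rw [Category.comp_id]
      exact ChainComplex.toSingle₀Equiv_symm_apply_f_zero (C := Q) (X := M) g _
    let γ := ShortComplex.HomologyMapData.ofIsColimitCokernelCofork φ hg₁ _ hc₁ hg₂ _ hc₂ (𝟙 M) comm
    rw [γ.left.quasiIso_iff]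
    dsimp [γ, ShortComplex.HomologyMapData.ofIsColimitCokernelCofork,
      ShortComplex.LeftHomologyMapData.ofIsColimitCokernelCofork]
    exact IsIso.id M
  haveI : QuasiIso π := ⟨fun i => by cases i with | zero => exact hq0 | succ k => exact hq1 k⟩
  let Pres : ProjectiveResolution M := { complex := Q, projective := fun _ => hP, π := π }
  let K := Q.linearYonedaObj ℤ L
  let e : (((_root_.Ext ℤ (ModuleCat.{0} R) (n+1)).obj (Opposite.op M)).obj L) ≅ K.homology (n+1) :=
    Pres.isoExt (n+1) L
  have step1 : ExtVanish (n+1) M L ↔ Subsingleton (K.homology (n+1)) :=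
    Equiv.subsingleton_congr
      ⟨e.hom, e.inv, fun x => e.hom_inv_id_apply x, fun x => e.inv_hom_id_apply x⟩
  have step2 : Subsingleton (K.homology (n+1)) ↔ K.ExactAt (n+1) := by
    rw [subsingleton_iff_isZero, HomologicalComplex.exactAt_iff_isZero_homology]
  have step3 : K.ExactAt (n+1) ↔ (K.sc' n (n+1) (n+2)).Exact :=
    HomologicalComplex.exactAt_iff' K n (n+1) (n+2) (by simp) (by simp)
  rw [step1, step2, step3, ShortComplex.moduleCat_exact_iff]
  have hdf : ∀ (i : ℕ) (u : P ⟶ L), (K.d i (i+1)) u = F ≫ u := by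
    intro i u
    show Q.d (i+1) i ≫ u = F ≫ u
    rw [hQd]
  constructor
  · intro h u hu
    obtain ⟨w, hw⟩ := h u ((hdf (n+1) u).trans hu)
    exact ⟨w, (hdf n w).symm.trans hw⟩
  · intro h u hu
    obtain ⟨w, hw⟩ := h u ((hdf (n+1) u).symm.trans hu)
    exact ⟨w, (hdf n w).trans hw⟩

lemma isSGProj_forward {𝓛 : Set (ModuleCat.{0} R)} {M : ModuleCat.{0} R}
    (h : IsSGProj 𝓛 M) :
    ∃ (P : ModuleCat.{0} R) (i : M ⟶ P) (g : P ⟶ M),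
      Projective P ∧ SES i g ∧ ∀ L ∈ 𝓛, ∀ k : ℕ, ExtVanish (k+1) M L := by
  obtain ⟨P, f, hP, ⟨w, hex⟩, hlift, ⟨iso⟩⟩ := h
  haveI hepi0 : Epi (kernel.lift f f w) :=
    (ShortComplex.exact_iff_epi_kernel_lift (ShortComplex.mk f f w)).1 hex
  have hg0ι : kernel.lift f f w ≫ kernel.ι f = f := kernel.lift_ι f f w
  have hιinj : Function.Injective (kernel.ι f) :=
    (ModuleCat.mono_iff_injective (kernel.ι f)).1 inferInstance
  have hιg0 : kernel.ι f ≫ kernel.lift f f w = 0 := by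
    rw [← cancel_mono (kernel.ι f), Category.assoc, hg0ι, kernel.condition, zero_comp]
  have hfg0 : f ≫ kernel.lift f f w = 0 := by
    rw [← cancel_mono (kernel.ι f), Category.assoc, hg0ι, w, zero_comp]
  set g : P ⟶ M := kernel.lift f f w ≫ iso.inv with hgdef
  set i : M ⟶ P := iso.hom ≫ kernel.ι f with hidef
  haveI : Epi g := epi_comp _ _
  haveI : Mono i := mono_comp _ _
  have hig : i ≫ g = 0 := by
    rw [hidef, hgdef, Category.assoc, ← Category.assoc (kernel.ι f), hιg0, zero_comp, comp_zero]
  have hfg : f ≫ g = 0 := by rw [hgdef, ← Category.assoc, hfg0, zero_comp]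
  have hexel : ∀ x : P, f x = 0 → ∃ y : P, f y = x :=
    (ShortComplex.moduleCat_exact_iff _).1 hex
  have hinvinj : Function.Injective iso.inv :=
    (ModuleCat.mono_iff_injective iso.inv).1 inferInstance
  have happf : ∀ x : P, f x = (kernel.ι f) ((kernel.lift f f w) x) := by
    intro x
    exact (ConcreteCategory.congr_hom hg0ι x).symm
  have hker0 : ∀ x : P, g x = 0 → f x = 0 := by
    intro x hx
    have h1 : (kernel.lift f f w) x = 0 := by
      apply hinvinj
      simpa [hgdef] using hx
    rw [happf x, h1, map_zero]
  have hexact_ig : (ShortComplex.mk i g hig).Exact := by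
    rw [ShortComplex.moduleCat_exact_iff]
    intro x hx
    obtain ⟨y, hy⟩ := hexel x (hker0 x hx)
    refine ⟨g y, ?_⟩
    show (kernel.ι f) (iso.hom (g y)) = x
    have h2 : iso.hom (g y) = (kernel.lift f f w) y := by
      exact ConcreteCategory.congr_hom iso.inv_hom_id ((kernel.lift f f w) y)
    rw [h2, ← happf y, hy]
  have hker : (ShortComplex.mk f g hfg).Exact := by
    rw [ShortComplex.moduleCat_exact_iff]
    intro x hx
    exact hexel x (hker0 x hx)
  refine ⟨P, i, g, hP, ⟨hig, { exact := hexact_ig }⟩, ?_⟩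
  intro L hL k
  exact (extVanish_iff_lift hP f g w hfg inferInstance hex hker k L).mpr
    (fun u hu => hlift L hL u hu)

lemma isSGProj_backward {𝓛 : Set (ModuleCat.{0} R)} {M : ModuleCat.{0} R}
    {P : ModuleCat.{0} R} {f : M ⟶ P} {g : P ⟶ M}
    (hP : Projective P) (hses : SES f g) (hext : ∀ L ∈ 𝓛, ExtVanish 1 M L) :
    IsSGProj 𝓛 M := by
  obtain ⟨w, hse⟩ := hses
  haveI := hse.mono_f
  haveI := hse.epi_g
  have hfinj : Function.Injective f := (ModuleCat.mono_iff_injective f).1 inferInstance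
  have hgsurj : Function.Surjective g := (ModuleCat.epi_iff_surjective g).1 inferInstance
  have hexel : ∀ x : P, g x = 0 → ∃ m : M, f m = x :=
    (ShortComplex.moduleCat_exact_iff _).1 hse.exact
  have hFF : (g ≫ f) ≫ (g ≫ f) = 0 := by
    rw [Category.assoc, ← Category.assoc f, w, zero_comp, comp_zero]
  have hFg : (g ≫ f) ≫ g = 0 := by rw [Category.assoc, w, comp_zero]
  have hcomp : ∀ x : P, (g ≫ f) x = f (g x) := fun x => rfl
  have hwel : ∀ m : M, g (f m) = 0 := by
    intro m
    have := ConcreteCategory.congr_hom w m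
    simpa using this
  have key : ∀ x : P, g x = 0 → ∃ y : P, (g ≫ f) y = x := by
    intro x hx
    obtain ⟨m, hm⟩ := hexel x hx
    obtain ⟨y, hy⟩ := hgsurj m
    exact ⟨y, by rw [hcomp, hy, hm]⟩
  have hmid : (ShortComplex.mk (g ≫ f) (g ≫ f) hFF).Exact := by
    rw [ShortComplex.moduleCat_exact_iff]
    intro x hx
    have hgx : g x = 0 := by
      apply hfinj
      rw [map_zero]
      exact hx
    exact key x hgx
  have hker : (ShortComplex.mk (g ≫ f) g hFg).Exact := by
    rw [ShortComplex.moduleCat_exact_iff]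
    intro x hx
    exact key x hx
  let e1 : M ≅ kernel g := hse.exact.fIsKernel.conePointUniqueUpToIso (limit.isLimit _)
  let e2 : kernel (g ≫ f) ≅ kernel g := kernelCompMono g f
  refine ⟨P, g ≫ f, hP, ⟨hFF, hmid⟩, ?_, ⟨e1 ≪≫ e2.symm⟩⟩
  intro T hT u hu
  exact (extVanish_iff_lift hP (g ≫ f) g hFF hFg inferInstance hmid hker 0 T).mp
    (hext T hT) u hu

end StrongGorenstein


theorem stmt15
    (R : Type) [Ring R] (𝓛 : Set (ModuleCat.{0} R)) (𝓐 : Set (ModuleCat.{0} Rᵐᵒᵖ))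
    (hdp : CompleteDualityPair 𝓛 𝓐) (M : ModuleCat.{0} R) :
    (IsSGProj 𝓛 M ↔
      ∃ (P : ModuleCat.{0} R) (f : M ⟶ P) (g : P ⟶ M),
        Projective P ∧ SES f g ∧ ∀ L ∈ 𝓛, ExtVanish 1 M L) ∧
    (IsSGProj 𝓛 M ↔
      ∃ (P : ModuleCat.{0} R) (f : M ⟶ P) (g : P ⟶ M),
        Projective P ∧ SES f g ∧ ∀ L ∈ 𝓛, ∀ i : ℕ, 1 ≤ i → ExtVanish i M L) := by
  constructor
  · constructor
    · intro h
      obtain ⟨P, i, g, h1, h2, h3⟩ := isSGProj_forward h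
      exact ⟨P, i, g, h1, h2, fun L hL => h3 L hL 0⟩
    · rintro ⟨P, f, g, h1, h2, h3⟩
      exact isSGProj_backward h1 h2 h3
  · constructor
    · intro h
      obtain ⟨P, i, g, h1, h2, h3⟩ := isSGProj_forward h
      refine ⟨P, i, g, h1, h2, fun L hL j hj => ?_⟩
      obtain _ | k := j
      · omega
      · exact h3 L hL k
    · rintro ⟨P, f, g, h1, h2, h3⟩
      exact isSGProj_backward h1 h2 (fun L hL => h3 L hL 1 le_rfl)

end DualityPaper
end

section
/- Let G be a strongly Gorenstein (L,A)-projective R-module. Then the right Ext-orthogonal class G^⊥ = {N : Ext¹_R(G, N) = 0} is a thick subcategory of R-Mod: it is closed under direct summands, extensions, kernels of epimorphisms between its objects, and cokernels of monomorphisms between its objects (i.e., closed under two-out-of-three in short exact sequences). -/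
open CategoryTheory CategoryTheory.Limits DirectSum

namespace DualityPaper

variable {R : Type} [Ring R]

section Aux

variable {R : Type} [Ring R]

/-- The lifting property that characterizes `Ext^1(coker-type module, N) = 0` for the
periodic complex determined by `f : P ⟶ P`. -/
def LiftProp (P : ModuleCat.{0} R) (f : P ⟶ P) (N : ModuleCat.{0} R) : Prop :=
  ∀ g : P ⟶ N, f ≫ g = 0 → ∃ h : P ⟶ N, f ≫ h = g

lemma extVanish_of_iso {n : ℕ} {M M' N : ModuleCat.{0} R} (i : M ≅ M')
    (h : ExtVanish n M' N) : ExtVanish n M N := by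
  unfold ExtVanish at h ⊢
  let j := ((_root_.Ext ℤ (ModuleCat.{0} R) n).mapIso i.op).app N
  have heq := Equiv.subsingleton_congr
    (⟨j.hom, j.inv,
      fun x => congrArg
        (fun (g : ((_root_.Ext ℤ (ModuleCat.{0} R) n).obj (Opposite.op M')).obj N ⟶
          ((_root_.Ext ℤ (ModuleCat.{0} R) n).obj (Opposite.op M')).obj N) => g x)
        j.hom_inv_id,
      fun x => congrArg
        (fun (g : ((_root_.Ext ℤ (ModuleCat.{0} R) n).obj (Opposite.op M)).obj N ⟶
          ((_root_.Ext ℤ (ModuleCat.{0} R) n).obj (Opposite.op M)).obj N) => g x)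
        j.inv_hom_id⟩ :
      (((_root_.Ext ℤ (ModuleCat.{0} R) n).obj (Opposite.op M')).obj N) ≃
        (((_root_.Ext ℤ (ModuleCat.{0} R) n).obj (Opposite.op M)).obj N))
  exact heq.mp h

lemma extVanish_one_iff_liftProp (P : ModuleCat.{0} R) (f : P ⟶ P) (hP : Projective P)
    (w : f ≫ f = 0) (hex : (ShortComplex.mk f f w).Exact) (N : ModuleCat.{0} R) :
    ExtVanish 1 (kernel f) N ↔ LiftProp P f N := by
  haveI := hP
  classical
  rw [ShortComplex.moduleCat_exact_iff] at hex
  set e : P ⟶ kernel f := kernel.lift f f w with he_def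
  have he : e ≫ kernel.ι f = f := kernel.lift_ι f f w
  have hι : Function.Injective (kernel.ι f) := by
    rw [← ModuleCat.mono_iff_injective]; infer_instance
  have heapp : ∀ x : P, kernel.ι f (e x) = f x := fun x =>
    congrArg (fun (g : P ⟶ P) => g x) he
  have hesurj : Function.Surjective e := by
    intro y
    have h0 : f (kernel.ι f y) = 0 := by
      have := kernel.condition f
      calc f (kernel.ι f y) = (kernel.ι f ≫ f) y := rfl
        _ = 0 := by rw [this]; rfl
    obtain ⟨x, hx⟩ := hex _ h0
    exact ⟨x, hι (by rw [heapp, hx])⟩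
  have hfe : f ≫ e = 0 := by
    rw [← cancel_mono (kernel.ι f), Category.assoc, he, w, zero_comp]
  set Q : ChainComplex (ModuleCat.{0} R) ℕ :=
    ChainComplex.of (fun _ => P) (fun _ => f) (fun _ => w) with hQ
  have hQd : ∀ n : ℕ, Q.d (n + 1) n = f := fun n => ChainComplex.of_d (fun _ => P) (fun _ => f) n
  set π : Q ⟶ (ChainComplex.single₀ (ModuleCat.{0} R)).obj (kernel f) :=
    (ChainComplex.toSingle₀Equiv Q (kernel f)).symm ⟨e, by rw [hQd, hfe]⟩ with hπ
  have hπ0 : π.f 0 = e := ChainComplex.toSingle₀Equiv_symm_apply_f_zero _ _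
  haveI : QuasiIso π := ⟨fun n => by
    cases n with
    | zero =>
      rw [ChainComplex.quasiIsoAt₀_iff, ShortComplex.quasiIso_iff_of_zeros']
      · constructor
        · rw [ShortComplex.moduleCat_exact_iff]
          intro x hx
          dsimp at x hx ⊢
          change P at x
          change (ConcreteCategory.hom (π.f 0)) x = 0 at hx
          change ∃ y : P, (ConcreteCategory.hom (Q.d 1 0)) y = x
          rw [hπ0] at hx
          change (ConcreteCategory.hom e) x = (0 : (kernel f : ModuleCat.{0} R)) at hx
          have h0 : f x = 0 := by
            rw [← heapp x]
            simpa using congrArg (kernel.ι f) hx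
          obtain ⟨y, hy⟩ := hex x h0
          exact ⟨y, by rw [hQd]; exact hy⟩
        · change Epi (π.f 0)
          rw [hπ0]
          exact (ModuleCat.epi_iff_surjective (f := e)).2 hesurj
      all_goals rfl
    | succ n =>
      rw [quasiIsoAt_iff_exactAt']
      · rw [HomologicalComplex.exactAt_iff' Q (n + 2) (n + 1) n
          (by simp) (by simp), ShortComplex.moduleCat_exact_iff]
        intro x hx
        dsimp at x hx ⊢
        change P at x
        change (ConcreteCategory.hom (Q.d (n + 1) n)) x = 0 at hx
        change ∃ y : P, (ConcreteCategory.hom (Q.d (n + 1 + 1) (n + 1))) y = x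
        rw [hQd] at hx
        obtain ⟨y, hy⟩ := hex x hx
        exact ⟨y, by rw [hQd]; exact hy⟩
      · apply ChainComplex.exactAt_succ_single_obj⟩
  let res : ProjectiveResolution (kernel f) :=
    { complex := Q
      projective := fun n => by
        cases n <;> exact hP
      π := π }
  have hD : ∀ (i j : ℕ) (x : Q.X i ⟶ N), (Q.linearYonedaObj ℤ N).d i j x = Q.d j i ≫ x :=
    fun i j x => rfl
  have hEA : (Q.linearYonedaObj ℤ N).ExactAt 1 ↔ LiftProp P f N := by
    rw [HomologicalComplex.exactAt_iff' _ 0 1 2 (by simp) (by simp),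
      ShortComplex.moduleCat_exact_iff]
    constructor
    · intro H g hg
      obtain ⟨h, hh⟩ := H g (show ((Q.linearYonedaObj ℤ N).d 1 2) g = 0 by
        rw [hD 1 2 g, hQd 1]; exact hg)
      refine ⟨h, ?_⟩
      have hh' : ((Q.linearYonedaObj ℤ N).d 0 1) h = g := hh
      rw [hD 0 1 h, hQd 0] at hh'
      exact hh'
    · intro H x hx
      have hx' : ((Q.linearYonedaObj ℤ N).d 1 2) x = 0 := hx
      rw [hD 1 2 x, hQd 1] at hx'
      obtain ⟨h, hh⟩ := H x hx'
      refine ⟨h, ?_⟩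
      show ((Q.linearYonedaObj ℤ N).d 0 1) h = x
      rw [hD 0 1 h, hQd 0]
      exact hh
  have hsub : Subsingleton ((Q.linearYonedaObj ℤ N).homology 1) ↔ LiftProp P f N := by
    rw [← hEA, HomologicalComplex.exactAt_iff_isZero_homology]
    constructor
    · intro h
      haveI := h
      exact ModuleCat.isZero_of_subsingleton _
    · intro h
      refine ⟨fun a b => ?_⟩
      have hz : (𝟙 ((Q.linearYonedaObj ℤ N).homology 1)) = 0 := h.eq_of_src _ _
      have ha : a = 0 := by
        calc a = (𝟙 ((Q.linearYonedaObj ℤ N).homology 1)) a := rfl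
          _ = (0 : (Q.linearYonedaObj ℤ N).homology 1 ⟶ (Q.linearYonedaObj ℤ N).homology 1) a := by rw [hz]
          _ = 0 := rfl
      have hb : b = 0 := by
        calc b = (𝟙 ((Q.linearYonedaObj ℤ N).homology 1)) b := rfl
          _ = (0 : (Q.linearYonedaObj ℤ N).homology 1 ⟶ (Q.linearYonedaObj ℤ N).homology 1) b := by rw [hz]
          _ = 0 := rfl
      rw [ha, hb]
  let i := res.isoExt (R := ℤ) 1 N
  have heq := Equiv.subsingleton_congr
    (⟨i.hom, i.inv,
      fun x => congrArg
        (fun (g : ((_root_.Ext ℤ (ModuleCat.{0} R) 1).obj (Opposite.op (kernel f))).obj N ⟶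
          ((_root_.Ext ℤ (ModuleCat.{0} R) 1).obj (Opposite.op (kernel f))).obj N) => g x)
        i.hom_inv_id,
      fun x => congrArg
        (fun (g : (Q.linearYonedaObj ℤ N).homology 1 ⟶ (Q.linearYonedaObj ℤ N).homology 1) => g x)
        i.inv_hom_id⟩ :
      (((_root_.Ext ℤ (ModuleCat.{0} R) 1).obj (Opposite.op (kernel f))).obj N) ≃
        ((Q.linearYonedaObj ℤ N).homology 1))
  unfold ExtVanish
  rw [heq]
  exact hsub

end Aux

/-- the right Ext-orthogonal class of a strongly Gorenstein (𝓛,𝓐)-projective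
module is thick. -/
theorem stmt16
    (R : Type) [Ring R] (𝓛 : Set (ModuleCat.{0} R)) (𝓐 : Set (ModuleCat.{0} Rᵐᵒᵖ))
    (hdp : CompleteDualityPair 𝓛 𝓐) (G : ModuleCat.{0} R) (hG : IsSGProj 𝓛 G) :
    (∀ (N N' : ModuleCat.{0} R) (i : N' ⟶ N) (p : N ⟶ N'),
      i ≫ p = 𝟙 N' → ExtVanish 1 G N → ExtVanish 1 G N') ∧
    (∀ {A B C : ModuleCat.{0} R} (f : A ⟶ B) (g : B ⟶ C), SES f g →
      ((ExtVanish 1 G A → ExtVanish 1 G C → ExtVanish 1 G B) ∧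
       (ExtVanish 1 G B → ExtVanish 1 G C → ExtVanish 1 G A) ∧
       (ExtVanish 1 G A → ExtVanish 1 G B → ExtVanish 1 G C))) := by
  obtain ⟨P, p, hP, ⟨w, hexact⟩, hlift, ⟨iso⟩⟩ := hG
  haveI := hP
  have key : ∀ N : ModuleCat.{0} R, ExtVanish 1 G N ↔ LiftProp P p N := fun N => by
    constructor
    · intro h
      exact (extVanish_one_iff_liftProp P p hP w hexact N).1 (extVanish_of_iso iso.symm h)
    · intro h
      exact extVanish_of_iso iso ((extVanish_one_iff_liftProp P p hP w hexact N).2 h)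
  constructor
  · intro N N' i pr hip hN
    rw [key] at hN ⊢
    intro g hg
    obtain ⟨h, hh⟩ := hN (g ≫ i) (by rw [← Category.assoc, hg, zero_comp])
    refine ⟨h ≫ pr, ?_⟩
    rw [← Category.assoc, hh, Category.assoc, hip, Category.comp_id]
  · intro A B C fab gbc hses
    obtain ⟨w', hse⟩ := hses
    haveI := hse.mono_f
    haveI := hse.epi_g
    refine ⟨?_, ?_, ?_⟩
    · -- extensions
      intro hA hC
      rw [key] at hA hC ⊢
      intro g hg
      obtain ⟨hC', hhC⟩ := hC (g ≫ gbc) (by rw [← Category.assoc, hg, zero_comp])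
      set hB : P ⟶ B := Projective.factorThru hC' gbc with hB_def
      have hBc : hB ≫ gbc = hC' := Projective.factorThru_comp _ _
      set t : P ⟶ B := g - p ≫ hB with ht_def
      have ht : t ≫ gbc = 0 := by
        rw [ht_def]
        simp only [Preadditive.sub_comp, Category.assoc, hBc, hhC, sub_self]
      have hu : (hse.exact.lift t ht) ≫ fab = t := hse.exact.lift_f t ht
      have hpt : p ≫ t = 0 := by
        rw [ht_def, Preadditive.comp_sub, hg, ← Category.assoc, w, zero_comp, sub_zero]
      have hpu : p ≫ hse.exact.lift t ht = 0 := by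
        rw [← cancel_mono fab, Category.assoc, hu, zero_comp, hpt]
      obtain ⟨v, hv⟩ := hA _ hpu
      refine ⟨v ≫ fab + hB, ?_⟩
      rw [Preadditive.comp_add, ← Category.assoc, hv, hu, ht_def]
      abel
    · -- kernels of epis
      intro hB hC
      rw [key] at hB hC ⊢
      intro u hu
      obtain ⟨h, hh⟩ := hB (u ≫ fab) (by rw [← Category.assoc, hu, zero_comp])
      obtain ⟨k, hk⟩ := hC (h ≫ gbc)
        (by rw [← Category.assoc, hh, Category.assoc, w', comp_zero])
      set k' : P ⟶ B := Projective.factorThru k gbc with hk'_def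
      have hk'c : k' ≫ gbc = k := Projective.factorThru_comp _ _
      set h' : P ⟶ B := h - p ≫ k' with hh'_def
      have hh'g : h' ≫ gbc = 0 := by
        rw [hh'_def]
        simp only [Preadditive.sub_comp, Category.assoc, hk'c, ← hk, sub_self]
      have hv : (hse.exact.lift h' hh'g) ≫ fab = h' := hse.exact.lift_f _ _
      refine ⟨hse.exact.lift h' hh'g, ?_⟩
      rw [← cancel_mono fab, Category.assoc, hv, hh'_def, Preadditive.comp_sub, hh,
        ← Category.assoc, w, zero_comp, sub_zero]
    · -- cokernels of monos
      intro hA hB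
      rw [key] at hA hB ⊢
      intro g hg
      set g' : P ⟶ B := Projective.factorThru g gbc with hg'_def
      have hg'c : g' ≫ gbc = g := Projective.factorThru_comp _ _
      have hpg' : (p ≫ g') ≫ gbc = 0 := by rw [Category.assoc, hg'c, hg]
      have hu : (hse.exact.lift (p ≫ g') hpg') ≫ fab = p ≫ g' := hse.exact.lift_f _ _
      have hpu : p ≫ hse.exact.lift (p ≫ g') hpg' = 0 := by
        rw [← cancel_mono fab, Category.assoc, hu, ← Category.assoc, w, zero_comp, zero_comp]
      obtain ⟨v, hv⟩ := hA _ hpu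
      have hgt : p ≫ (g' - v ≫ fab) = 0 := by
        rw [Preadditive.comp_sub, ← Category.assoc, hv, hu, sub_self]
      obtain ⟨h', hh'⟩ := hB (g' - v ≫ fab) hgt
      refine ⟨h' ≫ gbc, ?_⟩
      rw [← Category.assoc, hh']
      simp only [Preadditive.sub_comp, Category.assoc, w', comp_zero, sub_zero, hg'c]

end DualityPaper
end

section
/- An R-module M is Gorenstein (L,A)-projective if and only if M is a direct summand of some strongly Gorenstein (L,A)-projective module. -/
open CategoryTheory CategoryTheory.Limits DirectSum

namespace DualityPaper

variable {R : Type} [Ring R]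

/-! ### Toolkit -/

section Toolkit

lemma ses_iff {A B C : ModuleCat.{0} R} (f : A ⟶ B) (g : B ⟶ C) :
    SES f g ↔ Function.Injective f ∧ Function.Surjective g ∧
      LinearMap.range f.hom = LinearMap.ker g.hom := by
  constructor
  · rintro ⟨w, h⟩
    exact ⟨h.moduleCat_injective_f, h.moduleCat_surjective_g,
      h.exact.moduleCat_range_eq_ker⟩
  · rintro ⟨h1, h2, h3⟩
    have w : f ≫ g = 0 := by
      ext x
      have : f x ∈ LinearMap.ker g.hom := h3 ▸ LinearMap.mem_range_self f.hom x
      simpa using this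
    refine ⟨w, ?_⟩
    have m : Mono (ShortComplex.mk f g w).f := (ModuleCat.mono_iff_injective f).mpr h1
    have e : Epi (ShortComplex.mk f g w).g := (ModuleCat.epi_iff_surjective g).mpr h2
    exact ⟨(ShortComplex.moduleCat_exact_iff_range_eq_ker
            (ShortComplex.mk f g w)).mpr h3⟩

lemma SES.w {A B C : ModuleCat.{0} R} {f : A ⟶ B} {g : B ⟶ C} (h : SES f g) :
    f ≫ g = 0 := h.1

lemma SES.inj {A B C : ModuleCat.{0} R} {f : A ⟶ B} {g : B ⟶ C} (h : SES f g) :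
    Function.Injective f := ((ses_iff f g).mp h).1

lemma SES.surj {A B C : ModuleCat.{0} R} {f : A ⟶ B} {g : B ⟶ C} (h : SES f g) :
    Function.Surjective g := ((ses_iff f g).mp h).2.1

lemma SES.range_eq_ker {A B C : ModuleCat.{0} R} {f : A ⟶ B} {g : B ⟶ C} (h : SES f g) :
    LinearMap.range f.hom = LinearMap.ker g.hom := ((ses_iff f g).mp h).2.2

lemma SES.apply_apply {A B C : ModuleCat.{0} R} {f : A ⟶ B} {g : B ⟶ C} (h : SES f g)
    (x : A) : g (f x) = 0 := by
  have := congrArg (fun φ => φ x) h.w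
  simpa using this

/-- descend a map along a surjection whose kernel it kills -/
lemma descend {V B L : ModuleCat.{0} R} (π : V ⟶ B) (θ : V ⟶ L)
    (hsurj : Function.Surjective π) (hker : LinearMap.ker π.hom ≤ LinearMap.ker θ.hom) :
    ∃ Φ : B ⟶ L, π ≫ Φ = θ := by
  have hbij : Function.Bijective ((LinearMap.ker π.hom).liftQ π.hom le_rfl) := by
    constructor
    · rw [← LinearMap.ker_eq_bot]
      exact Submodule.ker_liftQ_eq_bot _ _ _ le_rfl
    · intro b
      obtain ⟨v, rfl⟩ := hsurj b
      exact ⟨Submodule.Quotient.mk v, by simp⟩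
  let e : (↥V ⧸ LinearMap.ker π.hom) ≃ₗ[R] ↥B :=
    LinearEquiv.ofBijective _ hbij
  refine ⟨ModuleCat.ofHom (((LinearMap.ker π.hom).liftQ θ.hom hker).comp (e.symm : ↥B →ₗ[R] _)), ?_⟩
  ext v
  have he : e (Submodule.Quotient.mk v) = π v := by simp [e]
  have : e.symm (π v) = Submodule.Quotient.mk v := by
    rw [← he, LinearEquiv.symm_apply_apply]
  show ((LinearMap.ker π.hom).liftQ θ.hom hker) (e.symm (π v)) = θ v
  rw [this]
  simp

/-- every projective module belongs to `𝓛` -/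
lemma proj_mem {𝓛 : Set (ModuleCat.{0} R)} {𝓐 : Set (ModuleCat.{0} Rᵐᵒᵖ)}
    (hdp : CompleteDualityPair 𝓛 𝓐) (Q : ModuleCat.{0} R) (hQ : Projective Q) : Q ∈ 𝓛 := by
  have hproj : Module.Projective R ↥Q := by
    rw [IsProjective.iff_projective]
    exact hQ
  obtain ⟨s, hs⟩ := Module.projective_def'.mp hproj
  letI : DecidableEq ↥Q := Classical.decEq _
  letI : (m : R) → Decidable (m ≠ 0) := fun m => Classical.dec _
  -- the free module on ↥Q, as a direct sum
  have hfree : ModuleCat.of R (⨁ _ : ↥Q, ↥(ModuleCat.of R R)) ∈ 𝓛 :=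
    hdp.coprod_L ↥Q (fun _ => ModuleCat.of R R) (fun _ => hdp.self_mem)
  let eFin : (↥Q →₀ R) ≃ₗ[R] (⨁ _ : ↥Q, ↥(ModuleCat.of R R)) :=
    finsuppLequivDFinsupp R
  -- retraction data
  let i : Q ⟶ ModuleCat.of R (⨁ _ : ↥Q, ↥(ModuleCat.of R R)) :=
    ModuleCat.ofHom (eFin.toLinearMap.comp s)
  let p : ModuleCat.of R (⨁ _ : ↥Q, ↥(ModuleCat.of R R)) ⟶ Q :=
    ModuleCat.ofHom ((Finsupp.linearCombination R (id : ↥Q → ↥Q)).comp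
      eFin.symm.toLinearMap)
  have hip : i ≫ p = 𝟙 Q := by
    ext x
    show (Finsupp.linearCombination R (id : ↥Q → ↥Q)) (eFin.symm (eFin (s x))) = x
    rw [LinearEquiv.symm_apply_apply]
    exact DFunLike.congr_fun hs x
  exact hdp.summands_L _ hfree Q i p hip

end Toolkit


/-! ### The lifting predicate: `Ext¹(C, 𝓛) = 0`, elementarily -/

/-- Every map from a submodule (with quotient `Cc`) into some `L ∈ 𝓛` extends. -/
def Lifts (𝓛 : Set (ModuleCat.{0} R)) (Cc : ModuleCat.{0} R) : Prop :=
  ∀ L ∈ 𝓛, ∀ (X B : ModuleCat.{0} R) (a : X ⟶ B) (b : B ⟶ Cc), SES a b →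
    ∀ φ : X ⟶ L, ∃ Φ : B ⟶ L, a ≫ Φ = φ

lemma lifts_retract {𝓛 : Set (ModuleCat.{0} R)} {W X : ModuleCat.{0} R}
    (i : X ⟶ W) (p : W ⟶ X) (hip : i ≫ p = 𝟙 X) (hW : Lifts 𝓛 W) : Lifts 𝓛 X := by
  intro L hL Y B a b hab φ
  have hpi : ∀ x : ↥X, p (i x) = x := fun x => by
    have := ConcreteCategory.congr_hom hip x
    simpa using this
  -- pullback of b along p
  let q : (↥B × ↥W) →ₗ[R] ↥X :=
    (b.hom.comp (LinearMap.fst R ↥B ↥W)) -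
      (p.hom.comp (LinearMap.snd R ↥B ↥W))
  have hqmem : ∀ z : ↥B × ↥W, z ∈ LinearMap.ker q ↔ b z.1 = p z.2 := fun z => by
    simp [q, LinearMap.mem_ker, sub_eq_zero]
  let E := ModuleCat.of R ↥(LinearMap.ker q)
  let aE : Y ⟶ E := ModuleCat.ofHom (LinearMap.codRestrict (LinearMap.ker q)
    (LinearMap.prod a.hom 0)
    (fun y => by
      rw [hqmem]
      show b (a y) = p 0
      rw [hab.apply_apply y, map_zero]))
  let πE : E ⟶ W := ModuleCat.ofHom ((LinearMap.snd R ↥B ↥W).comp (LinearMap.ker q).subtype)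
  have hses : SES aE πE := by
    rw [ses_iff]
    refine ⟨?_, ?_, ?_⟩
    · intro y y' h
      have := congrArg (fun z => (Subtype.val z).1) h
      exact hab.inj this
    · intro w
      obtain ⟨β, hβ⟩ := hab.surj (p w)
      exact ⟨⟨(β, w), by rw [hqmem]; exact hβ⟩, rfl⟩
    · ext z
      obtain ⟨⟨β, w⟩, hz⟩ := z
      constructor
      · rintro ⟨y, hy⟩
        have hw := congrArg (fun z : ↥(LinearMap.ker q) => z.val.2) hy
        have h0 : (fun z : ↥(LinearMap.ker q) => z.val.2) (aE y) = 0 := rfl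
        show πE ⟨(β, w), hz⟩ = 0
        show w = 0
        exact ((h0.symm.trans hw)).symm
      · intro hw
        have hw0 : w = 0 := hw
        have hb : b β = 0 := by
          have := (hqmem (β, w)).mp hz
          rw [hw0, map_zero] at this; exact this
        have : β ∈ LinearMap.ker b.hom := hb
        rw [← hab.range_eq_ker] at this
        obtain ⟨y, hy⟩ := this
        refine ⟨y, ?_⟩
        apply Subtype.ext
        show ((a y : ↥B), (0 : ↥W)) = (β, w)
        rw [hy, hw0]
  obtain ⟨Φ', hΦ'⟩ := hW L hL Y E aE πE hses φ
  let r : B ⟶ E := ModuleCat.ofHom (LinearMap.codRestrict (LinearMap.ker q)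
    (LinearMap.prod (LinearMap.id : ↥B →ₗ[R] ↥B) (i.hom.comp b.hom))
    (fun β => by rw [hqmem]; exact (hpi (b β)).symm))
  refine ⟨r ≫ Φ', ?_⟩
  ext y
  show Φ' (r (a y)) = φ y
  have : r (a y) = aE y := by
    apply Subtype.ext
    show ((a y : ↥B), i (b (a y))) = ((a y : ↥B), (0 : ↥W))
    rw [hab.apply_apply y, map_zero]
  rw [this]
  exact ConcreteCategory.congr_hom hΦ' y


lemma lifts_ext {𝓛 : Set (ModuleCat.{0} R)} {A B2 Cc : ModuleCat.{0} R}
    (f : A ⟶ B2) (g : B2 ⟶ Cc) (hfg : SES f g)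
    (hA : Lifts 𝓛 A) (hC : Lifts 𝓛 Cc) : Lifts 𝓛 B2 := by
  intro L hL X B u v huv φ
  -- BA = v⁻¹ (range f)
  let BA := Submodule.comap v.hom (LinearMap.range f.hom)
  let MBA := ModuleCat.of R ↥BA
  let u' : X ⟶ MBA := ModuleCat.ofHom (LinearMap.codRestrict BA u.hom (fun x => by
    show v (u x) ∈ LinearMap.range f.hom
    rw [huv.apply_apply x]
    exact Submodule.zero_mem _))
  let eA : ↥A ≃ₗ[R] ↥(LinearMap.range f.hom) := LinearEquiv.ofInjective f.hom hfg.inj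
  have heA : ∀ y : ↥(LinearMap.range f.hom), f (eA.symm y) = (y : ↥B2) := by
    rintro ⟨y, x, rfl⟩
    have h1 : eA x = ⟨f x, ⟨x, rfl⟩⟩ := by
      apply Subtype.ext
      rfl
    rw [← h1, LinearEquiv.symm_apply_apply]
    rw [h1]
  let τ : MBA ⟶ A := ModuleCat.ofHom ((eA.symm : ↥(LinearMap.range f.hom) →ₗ[R] ↥A).comp
    (LinearMap.codRestrict (LinearMap.range f.hom) (v.hom.comp BA.subtype)
      (fun z => z.2)))
  have hτ : ∀ z : ↥BA, f (τ z) = v ((z : ↥BA) : ↥B) := fun z => heA _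
  have hses1 : SES u' τ := by
    rw [ses_iff]
    refine ⟨?_, ?_, ?_⟩
    · intro x x' h
      exact huv.inj (congrArg (fun z : ↥BA => (z : ↥B)) h)
    · intro α
      obtain ⟨β, hβ⟩ := huv.surj (f α)
      refine ⟨⟨β, ⟨α, hβ.symm⟩⟩, ?_⟩
      apply hfg.inj
      refine (hτ _).trans ?_
      exact hβ
    · ext z
      constructor
      · rintro ⟨x, rfl⟩
        show τ (u' x) = 0
        apply hfg.inj
        rw [hτ (u' x), map_zero]
        exact huv.apply_apply x
      · intro hz
        have hz0 : τ z = 0 := hz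
        have h2 := hτ z
        rw [hz0, map_zero] at h2
        have h3 : BA.subtype z ∈ LinearMap.ker v.hom := h2.symm
        rw [← huv.range_eq_ker] at h3
        obtain ⟨x, hx⟩ := h3
        exact ⟨x, Subtype.ext hx⟩
  obtain ⟨Φ₁, hΦ₁⟩ := hA L hL X MBA u' τ hses1 φ
  -- second step
  let w : B ⟶ Cc := v ≫ g
  let sub : MBA ⟶ B := ModuleCat.ofHom BA.subtype
  have hses2 : SES sub w := by
    rw [ses_iff]
    refine ⟨Subtype.val_injective, ?_, ?_⟩
    · intro c
      obtain ⟨b2, hb2⟩ := hfg.surj c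
      obtain ⟨β, hβ⟩ := huv.surj b2
      refine ⟨β, ?_⟩
      show g (v β) = c
      rw [hβ, hb2]
    · ext β
      constructor
      · rintro ⟨z, rfl⟩
        show g (v (BA.subtype z)) = 0
        have h4 : v (BA.subtype z) = f (τ z) := (hτ z).symm
        rw [h4]
        exact hfg.apply_apply (τ z)
      · intro hβ
        have h5 : v β ∈ LinearMap.ker g.hom := hβ
        rw [← hfg.range_eq_ker] at h5
        obtain ⟨α, hα⟩ := h5
        exact ⟨⟨β, ⟨α, hα⟩⟩, rfl⟩
  obtain ⟨Φ, hΦ⟩ := hC L hL MBA B sub w hses2 Φ₁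
  refine ⟨Φ, ?_⟩
  ext x
  show Φ (u x) = φ x
  have h1 : Φ (u x) = Φ₁ (u' x) := (ConcreteCategory.congr_hom hΦ (u' x)).symm ▸ rfl
  calc Φ (u x) = Φ (sub (u' x)) := rfl
    _ = Φ₁ (u' x) := ConcreteCategory.congr_hom hΦ (u' x)
    _ = φ x := ConcreteCategory.congr_hom hΦ₁ x


lemma lifts_base {𝓛 : Set (ModuleCat.{0} R)} {W P : ModuleCat.{0} R}
    (ι : W ⟶ P) (π : P ⟶ W) (hses : SES ι π) (hP : Projective P)
    (hext : ∀ L ∈ 𝓛, ∀ ψ : W ⟶ L, ∃ h : P ⟶ L, ι ≫ h = ψ) : Lifts 𝓛 W := by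
  intro L hL X B a b hab φ
  have : Epi b := (ModuleCat.epi_iff_surjective b).mpr hab.surj
  let t : P ⟶ B := Projective.factorThru π b
  have htb : ∀ q : ↥P, b (t q) = π q := fun q =>
    ConcreteCategory.congr_hom (Projective.factorThru_comp π b) q
  have hmem : ∀ z : ↥W, t (ι z) ∈ LinearMap.range a.hom := by
    intro z
    rw [hab.range_eq_ker]
    show b (t (ι z)) = 0
    rw [htb (ι z)]
    exact hses.apply_apply z
  let eX : ↥X ≃ₗ[R] ↥(LinearMap.range a.hom) := LinearEquiv.ofInjective a.hom hab.inj
  have heX : ∀ y : ↥(LinearMap.range a.hom), a (eX.symm y) = (y : ↥B) := by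
    rintro ⟨y, x, rfl⟩
    have h1 : eX x = ⟨a x, ⟨x, rfl⟩⟩ := by
      apply Subtype.ext
      rfl
    rw [← h1, LinearEquiv.symm_apply_apply]
    rw [h1]
  let τ : W ⟶ X := ModuleCat.ofHom ((eX.symm : ↥(LinearMap.range a.hom) →ₗ[R] ↥X).comp
    (LinearMap.codRestrict (LinearMap.range a.hom) (t.hom.comp ι.hom) hmem))
  have hτ : ∀ z : ↥W, a (τ z) = t (ι z) := fun z => heX _
  obtain ⟨h, hh⟩ := hext L hL (τ ≫ φ)
  -- descend the coproduct map
  let S : ModuleCat.of R (↥P × ↥X) ⟶ B := ModuleCat.ofHom (LinearMap.coprod t.hom a.hom)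
  let θ : ModuleCat.of R (↥P × ↥X) ⟶ L := ModuleCat.ofHom (LinearMap.coprod h.hom φ.hom)
  have hSsurj : Function.Surjective S := by
    intro β
    obtain ⟨q, hq⟩ := hses.surj (b β)
    have : b (β - t q) = 0 := by
      rw [map_sub, htb q, hq, sub_self]
    have : β - t q ∈ LinearMap.ker b.hom := this
    rw [← hab.range_eq_ker] at this
    obtain ⟨x, hx⟩ := this
    refine ⟨(q, x), ?_⟩
    show t q + a x = β
    rw [hx]
    abel
  have hker : LinearMap.ker S.hom ≤ LinearMap.ker θ.hom := by
    rintro ⟨q, x⟩ hqx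
    have h0 : t q + a x = 0 := hqx
    have hbq : π q = 0 := by
      have : b (t q + a x) = 0 := by rw [h0, map_zero]
      rw [map_add, htb q, hab.apply_apply x, add_zero] at this
      exact this
    have : q ∈ LinearMap.ker π.hom := hbq
    rw [← hses.range_eq_ker] at this
    obtain ⟨z, rfl⟩ := this
    have h6 : a (τ z) = - a x := by rw [hτ z]; exact eq_neg_of_add_eq_zero_left h0
    have h7 : τ z = -x := by
      apply hab.inj
      rw [h6, map_neg]
    show h (ι z) + φ x = 0
    have h8 : h (ι z) = φ (τ z) := ConcreteCategory.congr_hom hh z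
    rw [h8, h7, map_neg, neg_add_cancel]
  obtain ⟨Φ, hΦ⟩ := descend S θ hSsurj hker
  refine ⟨Φ, ?_⟩
  ext x
  have h9 : a x = S (0, x) := by
    show a x = t 0 + a x
    rw [map_zero, zero_add]
  show Φ (a x) = φ x
  rw [h9]
  have h10 : Φ (S (0, x)) = θ (0, x) := ConcreteCategory.congr_hom hΦ (0, x)
  rw [h10]
  show h 0 + φ x = φ x
  rw [map_zero, zero_add]


/-- The smallest class containing `W₀` and closed under extensions and retracts. -/
inductive GClass (W₀ : ModuleCat.{0} R) : ModuleCat.{0} R → Prop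
  | base : GClass W₀ W₀
  | ext {A B C : ModuleCat.{0} R} (f : A ⟶ B) (g : B ⟶ C) :
      SES f g → GClass W₀ A → GClass W₀ C → GClass W₀ B
  | retract {X W : ModuleCat.{0} R} (i : X ⟶ W) (p : W ⟶ X) :
      i ≫ p = 𝟙 X → GClass W₀ W → GClass W₀ X

lemma gclass_lifts {𝓛 : Set (ModuleCat.{0} R)} {W₀ P₀ : ModuleCat.{0} R}
    (ι₀ : W₀ ⟶ P₀) (π₀ : P₀ ⟶ W₀)
    (hses₀ : SES ι₀ π₀) (hP₀ : Projective P₀)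
    (hext₀ : ∀ L ∈ 𝓛, ∀ ψ : W₀ ⟶ L, ∃ h : P₀ ⟶ L, ι₀ ≫ h = ψ) :
    ∀ X, GClass W₀ X → Lifts 𝓛 X := by
  intro X hX
  induction hX with
  | base => exact lifts_base ι₀ π₀ hses₀ hP₀ hext₀
  | ext f g hfg _ _ ihA ihC => exact lifts_ext f g hfg ihA ihC
  | retract i p hip _ ihW => exact lifts_retract i p hip ihW

lemma module_projective_of_cat {Q : ModuleCat.{0} R} (h : Projective Q) :
    Module.Projective R ↥Q := by
  rw [IsProjective.iff_projective]
  exact h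

lemma cat_projective_of_module (Q : Type) [AddCommGroup Q] [Module R Q]
    (h : Module.Projective R Q) : Projective (ModuleCat.of R Q) :=
  (IsProjective.iff_projective Q).mp h

lemma projective_prod {Q1 Q2 : ModuleCat.{0} R} (h1 : Projective Q1) (h2 : Projective Q2) :
    Projective (ModuleCat.of R (↥Q1 × ↥Q2)) := by
  haveI := module_projective_of_cat h1
  haveI := module_projective_of_cat h2
  exact cat_projective_of_module _ inferInstance

lemma retract_pi {X W : ModuleCat.{0} R} (i : X ⟶ W) (p : W ⟶ X)
    (hip : i ≫ p = 𝟙 X) : ∀ x : ↥X, p (i x) = x := fun x => by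
  have := ConcreteCategory.congr_hom hip x
  simpa using this

lemma injective_of_retract {X W : ModuleCat.{0} R} (i : X ⟶ W) (p : W ⟶ X)
    (hip : i ≫ p = 𝟙 X) : Function.Injective i := by
  intro x x' h
  calc x = p (i x) := (retract_pi i p hip x).symm
    _ = p (i x') := by rw [h]
    _ = x' := retract_pi i p hip x'

lemma surjective_of_retract {X W : ModuleCat.{0} R} (i : X ⟶ W) (p : W ⟶ X)
    (hip : i ≫ p = 𝟙 X) : Function.Surjective p := fun x => ⟨i x, retract_pi i p hip x⟩

lemma gclass_kerp {W₀ X W : ModuleCat.{0} R} (i : X ⟶ W) (p : W ⟶ X) (hip : i ≫ p = 𝟙 X)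
    (hW : GClass W₀ W) : GClass W₀ (ModuleCat.of R ↥(LinearMap.ker p.hom)) := by
  have hpi : ∀ x : ↥X, p (i x) = x := fun x => by
    have := ConcreteCategory.congr_hom hip x
    simpa using this
  let K := LinearMap.ker p.hom
  let inc : ModuleCat.of R ↥K ⟶ W := ModuleCat.ofHom K.subtype
  let pr : W ⟶ ModuleCat.of R ↥K := ModuleCat.ofHom (LinearMap.codRestrict K
    ((LinearMap.id : ↥W →ₗ[R] ↥W) - i.hom.comp p.hom)
    (fun w => by
      show p (w - i (p w)) = 0
      rw [map_sub, hpi (p w), sub_self]))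
  refine GClass.retract inc pr ?_ hW
  ext z
  show z.val - i (p z.val) = z.val
  have hz : p z.val = 0 := z.2
  rw [hz, map_zero, sub_zero]

lemma gclass_cover {W₀ P₀ : ModuleCat.{0} R}
    (ι₀ : W₀ ⟶ P₀) (π₀ : P₀ ⟶ W₀) (hses₀ : SES ι₀ π₀) (hP₀ : Projective P₀) :
    ∀ X : ModuleCat.{0} R, GClass W₀ X → ∃ (Y Q : ModuleCat.{0} R) (a : Y ⟶ Q) (b : Q ⟶ X),
      GClass W₀ Y ∧ Projective Q ∧ SES a b := by
  intro X hX
  induction hX with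
  | base => exact ⟨W₀, P₀, ι₀, π₀, GClass.base, hP₀, hses₀⟩
  | ext f g hfg hA hC ihA ihC =>
    obtain ⟨A', QA, ιA, πA, hA', hQA, hsesA⟩ := ihA
    obtain ⟨C', QC, ιC, πC, hC', hQC, hsesC⟩ := ihC
    haveI : Epi g := (ModuleCat.epi_iff_surjective g).mpr hfg.surj
    let t : QC ⟶ _ := Projective.factorThru πC g
    have htg : ∀ y : ↥QC, g (t y) = πC y := fun y =>
      ConcreteCategory.congr_hom (Projective.factorThru_comp πC g) y
    let Q := ModuleCat.of R (↥QA × ↥QC)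
    let S : Q ⟶ _ := ModuleCat.ofHom (LinearMap.coprod (πA ≫ f : QA ⟶ _).hom t.hom)
    have hSapp : ∀ z : ↥QA × ↥QC, S z = f (πA z.1) + t z.2 := fun z => rfl
    have hSsurj : Function.Surjective S := by
      intro β
      obtain ⟨y, hy⟩ := hsesC.surj (g β)
      have h1 : g (β - t y) = 0 := by rw [map_sub, htg y, hy, sub_self]
      have h2 : β - t y ∈ LinearMap.ker g.hom := h1
      rw [← hfg.range_eq_ker] at h2
      obtain ⟨α, hα⟩ := h2
      obtain ⟨x, hx⟩ := hsesA.surj α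
      refine ⟨(x, y), ?_⟩
      rw [hSapp, hx, hα]
      abel
    let K := LinearMap.ker S.hom
    let MK := ModuleCat.of R ↥K
    let incK : MK ⟶ Q := ModuleCat.ofHom K.subtype
    have hsesK : SES incK S := by
      rw [ses_iff]
      exact ⟨Subtype.val_injective, hSsurj, K.range_subtype⟩
    -- the kernel is an extension of A' by C'
    let eC : ↥C' ≃ₗ[R] ↥(LinearMap.range ιC.hom) := LinearEquiv.ofInjective ιC.hom hsesC.inj
    have heC : ∀ y : ↥(LinearMap.range ιC.hom), ιC (eC.symm y) = (y : ↥QC) := by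
      rintro ⟨y, c, rfl⟩
      have h1 : eC c = ⟨ιC c, ⟨c, rfl⟩⟩ := by apply Subtype.ext; rfl
      rw [← h1, LinearEquiv.symm_apply_apply, h1]
    have hmemK : ∀ z : ↥K, (z.val.2) ∈ LinearMap.range ιC.hom := by
      intro z
      rw [hsesC.range_eq_ker]
      have h0 : f (πA z.val.1) + t z.val.2 = 0 := z.2
      show πC z.val.2 = 0
      rw [← htg]
      have : t z.val.2 = - f (πA z.val.1) :=
        eq_neg_of_add_eq_zero_right h0
      rw [this, map_neg]
      rw [hfg.apply_apply, neg_zero]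
    let γK : MK ⟶ C' := ModuleCat.ofHom ((eC.symm : _ →ₗ[R] ↥C').comp
      (LinearMap.codRestrict (LinearMap.range ιC.hom)
        ((LinearMap.snd R ↥QA ↥QC).comp K.subtype) hmemK))
    have hγK : ∀ z : ↥K, ιC (γK z) = z.val.2 := fun z => heC _
    let αK : A' ⟶ MK := ModuleCat.ofHom (LinearMap.codRestrict K
      ((LinearMap.inl R ↥QA ↥QC).comp ιA.hom)
      (fun a' => by
        show f (πA (ιA a')) + t 0 = 0
        rw [hsesA.apply_apply a', map_zero, map_zero, add_zero]))
    have hsesAK : SES αK γK := by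
      rw [ses_iff]
      refine ⟨?_, ?_, ?_⟩
      · intro a a' h
        have := congrArg (fun z : ↥K => z.val.1) h
        exact hsesA.inj this
      · intro c'
        have h1 : πC (ιC c') = 0 := hsesC.apply_apply c'
        have h2 : g (t (ιC c')) = 0 := by rw [htg, h1]
        have h3 : t (ιC c') ∈ LinearMap.ker g.hom := h2
        rw [← hfg.range_eq_ker] at h3
        obtain ⟨α, hα⟩ := h3
        obtain ⟨x, hx⟩ := hsesA.surj α
        have hmem : (-x, ιC c') ∈ K := by
          show f (πA (-x)) + t (ιC c') = 0
          rw [map_neg, map_neg, hx, hα]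
          abel
        refine ⟨⟨(-x, ιC c'), hmem⟩, ?_⟩
        apply hsesC.inj
        rw [hγK ⟨(-x, ιC c'), hmem⟩]
      · ext z
        constructor
        · rintro ⟨a', rfl⟩
          show γK (αK a') = 0
          apply hsesC.inj
          rw [hγK (αK a'), map_zero]
          rfl
        · intro hz
          have h1 : γK z = 0 := hz
          have h2 : z.val.2 = 0 := by
            rw [← hγK z, h1, map_zero]
          have h0 : f (πA z.val.1) + t z.val.2 = 0 := z.2
          rw [h2, map_zero, add_zero] at h0
          have h3 : πA z.val.1 = 0 := by
            apply hfg.inj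
            rw [h0, map_zero]
          have h4 : z.val.1 ∈ LinearMap.ker πA.hom := h3
          rw [← hsesA.range_eq_ker] at h4
          obtain ⟨a', ha'⟩ := h4
          refine ⟨a', ?_⟩
          apply Subtype.ext
          show (ιA a', (0 : ↥QC)) = z.val
          rw [ha', ← h2]
    exact ⟨MK, Q, incK, S, GClass.ext αK γK hsesAK hA' hC',
      projective_prod hQA hQC, hsesK⟩
  | retract i p hip hW ihW =>
    obtain ⟨W', Q, ιW, πW, hW', hQ, hsesW⟩ := ihW
    let πX : Q ⟶ _ := πW ≫ p
    let K := LinearMap.ker πX.hom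
    let MK := ModuleCat.of R ↥K
    let incK : MK ⟶ Q := ModuleCat.ofHom K.subtype
    have hsesK : SES incK πX := by
      rw [ses_iff]
      refine ⟨Subtype.val_injective, ?_, K.range_subtype⟩
      intro x
      obtain ⟨w, hw⟩ := hsesW.surj (i x)
      refine ⟨w, ?_⟩
      show p (πW w) = x
      rw [hw]
      exact retract_pi i p hip x
    -- K is an extension of W' by ker p
    let Kp := LinearMap.ker p.hom
    let α : W' ⟶ MK := ModuleCat.ofHom (LinearMap.codRestrict K ιW.hom
      (fun w' => by
        show p (πW (ιW w')) = 0
        rw [hsesW.apply_apply w', map_zero]))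
    let γ : MK ⟶ ModuleCat.of R ↥Kp := ModuleCat.ofHom (LinearMap.codRestrict Kp
      (πW.hom.comp K.subtype)
      (fun z => z.2))
    have hsesαγ : SES α γ := by
      rw [ses_iff]
      refine ⟨?_, ?_, ?_⟩
      · intro a a' h
        exact hsesW.inj (congrArg (fun z : ↥K => z.val) h)
      · rintro ⟨z, hz⟩
        obtain ⟨q, hq⟩ := hsesW.surj z
        have hqK : q ∈ K := by
          show p (πW q) = 0
          rw [hq]
          exact hz
        exact ⟨⟨q, hqK⟩, Subtype.ext hq⟩
      · ext z
        constructor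
        · rintro ⟨w', rfl⟩
          show γ (α w') = 0
          apply Subtype.ext
          show πW (ιW w') = 0
          exact hsesW.apply_apply w'
        · intro hz
          have h1 : πW z.val = 0 := congrArg Subtype.val hz
          have h2 : z.val ∈ LinearMap.ker πW.hom := h1
          rw [← hsesW.range_eq_ker] at h2
          obtain ⟨w', hw'⟩ := h2
          exact ⟨w', Subtype.ext hw'⟩
    exact ⟨MK, Q, incK, πX,
      GClass.ext α γ hsesαγ hW' (gclass_kerp i p hip hW), hQ, hsesK⟩


lemma gclass_cocover {𝓛 : Set (ModuleCat.{0} R)} {𝓐 : Set (ModuleCat.{0} Rᵐᵒᵖ)}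
    (hdp : CompleteDualityPair 𝓛 𝓐) {W₀ P₀ : ModuleCat.{0} R}
    (ι₀ : W₀ ⟶ P₀) (π₀ : P₀ ⟶ W₀) (hses₀ : SES ι₀ π₀) (hP₀ : Projective P₀)
    (hext₀ : ∀ L ∈ 𝓛, ∀ ψ : W₀ ⟶ L, ∃ h : P₀ ⟶ L, ι₀ ≫ h = ψ) :
    ∀ X : ModuleCat.{0} R, GClass W₀ X → ∃ (Q Y : ModuleCat.{0} R) (a : X ⟶ Q) (b : Q ⟶ Y),
      GClass W₀ Y ∧ Projective Q ∧ SES a b := by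
  intro X hX
  induction hX with
  | base => exact ⟨P₀, W₀, ι₀, π₀, GClass.base, hP₀, hses₀⟩
  | @ext A B C f g hfg hA hC ihA ihC =>
    obtain ⟨QA, A', jA, πA', hA', hQA, hsesA⟩ := ihA
    obtain ⟨QC, C', jC, πC', hC', hQC, hsesC⟩ := ihC
    -- extend jA over B using `Lifts C` (projectives are in 𝓛)
    obtain ⟨u, hu⟩ := gclass_lifts ι₀ π₀ hses₀ hP₀ hext₀ C hC QA
      (proj_mem hdp QA hQA) A B f g hfg jA
    have huapp : ∀ α : ↥A, u (f α) = jA α := fun α => ConcreteCategory.congr_hom hu α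
    let Q := ModuleCat.of R (↥QA × ↥QC)
    let J : B ⟶ Q := ModuleCat.ofHom (LinearMap.prod u.hom
      (g ≫ jC : B ⟶ QC).hom)
    have hJapp : ∀ β : ↥B, J β = (u β, jC (g β)) := fun β => rfl
    let rngJ := LinearMap.range J.hom
    let Cok := ModuleCat.of R (↥Q ⧸ rngJ)
    let mkQ : Q ⟶ Cok := ModuleCat.ofHom rngJ.mkQ
    have hJinj : Function.Injective J := by
      intro β β' h
      have h1 : jC (g β) = jC (g β') := congrArg Prod.snd (h : ((u β, jC (g β)) : ↥QA × ↥QC) = _)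
      have h2 : g β = g β' := hsesC.inj h1
      have h3 : g (β - β') = 0 := by rw [map_sub, h2, sub_self]
      have h4 : β - β' ∈ LinearMap.ker g.hom := h3
      rw [← hfg.range_eq_ker] at h4
      obtain ⟨α, hα⟩ := h4
      have h5 : u β = u β' := congrArg Prod.fst (h : ((u β, jC (g β)) : ↥QA × ↥QC) = _)
      have h6 : jA α = 0 := by
        rw [← huapp α, hα, map_sub, h5, sub_self]
      have h7 : α = 0 := hsesA.inj (by rw [h6, map_zero])
      have h8 : β - β' = 0 := by rw [← hα, h7, map_zero]
      exact sub_eq_zero.mp h8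
    have hsesJ : SES J mkQ := by
      rw [ses_iff]
      exact ⟨hJinj, Submodule.mkQ_surjective _, (Submodule.ker_mkQ rngJ).symm⟩
    -- the cokernel is an extension of A' by C'
    let inl' : QA ⟶ Q := ModuleCat.ofHom (LinearMap.inl R ↥QA ↥QC)
    let snd' : Q ⟶ QC := ModuleCat.ofHom (LinearMap.snd R ↥QA ↥QC)
    have hα' : LinearMap.ker πA'.hom ≤
        LinearMap.ker (inl' ≫ mkQ).hom := by
      intro q hq
      rw [← hsesA.range_eq_ker] at hq
      obtain ⟨α, hα⟩ := hq
      show mkQ ((q : ↥QA), (0 : ↥QC)) = 0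
      have : ((q : ↥QA), (0 : ↥QC)) ∈ rngJ := by
        refine ⟨f α, ?_⟩
        rw [hJapp, huapp, hα]
        have : g (f α) = 0 := hfg.apply_apply α
        rw [this, map_zero]
      exact (Submodule.Quotient.mk_eq_zero _).mpr this
    obtain ⟨αc, hαc⟩ := descend πA' (inl' ≫ mkQ) hsesA.surj hα'
    have hγ' : LinearMap.ker mkQ.hom ≤
        LinearMap.ker (snd' ≫ πC').hom := by
      intro q hq
      replace hq := (Submodule.Quotient.mk_eq_zero rngJ).mp hq
      obtain ⟨β, hβ⟩ := hq
      show πC' q.2 = 0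
      rw [← hβ]
      show πC' (jC (g β)) = 0
      exact hsesC.apply_apply (g β)
    obtain ⟨γc, hγc⟩ := descend mkQ (snd' ≫ πC')
      (Submodule.mkQ_surjective _) hγ'
    have hαapp : ∀ q : ↥QA, αc (πA' q) = mkQ (q, 0) := fun q => ConcreteCategory.congr_hom hαc q
    have hγapp : ∀ z : ↥Q, γc (mkQ z) = πC' z.2 := fun z => ConcreteCategory.congr_hom hγc z
    have hsesc : SES αc γc := by
      rw [ses_iff]
      refine ⟨?_, ?_, ?_⟩
      · intro a a' h
        obtain ⟨qa, rfl⟩ := hsesA.surj a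
        obtain ⟨qa', rfl⟩ := hsesA.surj a'
        rw [hαapp, hαapp] at h
        have h1 : ((qa - qa' : ↥QA), (0 : ↥QC)) ∈ rngJ := by
          rw [← Submodule.Quotient.mk_eq_zero]
          show mkQ ((qa - qa' : ↥QA), (0 : ↥QC)) = 0
          have : ((qa - qa' : ↥QA), (0 : ↥QC)) = ((qa, 0) - (qa', 0) : ↥QA × ↥QC) := by
            apply Prod.ext <;> simp
          rw [this, map_sub, h, sub_self]
        obtain ⟨β, hβ⟩ := h1
        have h2 : jC (g β) = 0 := congrArg Prod.snd hβ
        have h3 : g β = 0 := hsesC.inj (by rw [h2, map_zero])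
        have h4 : β ∈ LinearMap.ker g.hom := h3
        rw [← hfg.range_eq_ker] at h4
        obtain ⟨α, rfl⟩ := h4
        have h5 : u (f α) = qa - qa' := congrArg Prod.fst hβ
        rw [huapp] at h5
        have h6 : πA' (jA α) = 0 := hsesA.apply_apply α
        have : πA' qa - πA' qa' = 0 := by
          rw [← map_sub, ← h5, h6]
        rw [sub_eq_zero] at this
        exact this
      · intro c'
        obtain ⟨qc, rfl⟩ := hsesC.surj c'
        exact ⟨mkQ (0, qc), hγapp (0, qc)⟩
      · ext ξ
        constructor
        · rintro ⟨a', rfl⟩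
          obtain ⟨qa, rfl⟩ := hsesA.surj a'
          show γc (αc (πA' qa)) = 0
          rw [hαapp, hγapp]
          show πC' 0 = 0
          rw [map_zero]
        · intro hξ
          obtain ⟨z, rfl⟩ := Submodule.mkQ_surjective rngJ ξ
          have hξ2 : γc (mkQ z) = 0 := hξ
          have h1 : πC' z.2 = 0 := (hγapp z).symm.trans hξ2
          have h2 : z.2 ∈ LinearMap.ker πC'.hom := h1
          rw [← hsesC.range_eq_ker] at h2
          obtain ⟨c, hc⟩ := h2
          obtain ⟨β, hβ⟩ := hfg.surj c
          refine ⟨πA' (z.1 - u β), ?_⟩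
          rw [hαapp]
          show Submodule.Quotient.mk ((z.1 - u β : ↥QA), (0 : ↥QC)) = Submodule.Quotient.mk z
          rw [Submodule.Quotient.eq]
          refine ⟨-β, ?_⟩
          rw [hJapp]
          have e1 : u (-β) = -(u β) := map_neg u.hom β
          have e2 : jC (g (-β)) = - z.2 := by rw [map_neg, map_neg, hβ, hc]
          rw [e1, e2]
          apply Prod.ext
          · show -(u β) = (z.1 - u β) - z.1
            abel
          · show -(z.2) = 0 - z.2
            abel
    exact ⟨Q, Cok, J, mkQ, GClass.ext αc γc hsesc hA' hC',
      projective_prod hQA hQC, hsesJ⟩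
  | @retract X2 W2 i p hip hW ihW =>
    obtain ⟨Q, W', jW, π', hW', hQ, hsesW⟩ := ihW
    let j : X2 ⟶ Q := i ≫ jW
    let rngj := LinearMap.range j.hom
    let Y := ModuleCat.of R (↥Q ⧸ rngj)
    let mkQ : Q ⟶ Y := ModuleCat.ofHom rngj.mkQ
    have hsesj : SES j mkQ := by
      rw [ses_iff]
      refine ⟨?_, Submodule.mkQ_surjective _, (Submodule.ker_mkQ rngj).symm⟩
      intro x x' h
      exact injective_of_retract i p hip (hsesW.inj h)
    -- the cokernel is an extension of ker p by W'
    let Kp := LinearMap.ker p.hom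
    let α : ModuleCat.of R ↥Kp ⟶ Y := ModuleCat.ofHom Kp.subtype ≫ (jW : W2 ⟶ Q) ≫ mkQ
    have hγ' : LinearMap.ker mkQ.hom ≤ LinearMap.ker π'.hom := by
      intro q hq
      replace hq := (Submodule.Quotient.mk_eq_zero rngj).mp hq
      obtain ⟨x, hx⟩ := hq
      show π' q = 0
      rw [← hx]
      exact hsesW.apply_apply (i x)
    obtain ⟨γ, hγ⟩ := descend mkQ π' (Submodule.mkQ_surjective _) hγ'
    have hγapp : ∀ q : ↥Q, γ (mkQ q) = π' q := fun q => ConcreteCategory.congr_hom hγ q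
    have hsesαγ : SES α γ := by
      rw [ses_iff]
      refine ⟨?_, ?_, ?_⟩
      · intro z z' h
        have h1 : mkQ (jW (z.val - z'.val)) = 0 := by
          rw [map_sub, map_sub, sub_eq_zero]
          exact h
        replace h1 := (Submodule.Quotient.mk_eq_zero rngj).mp h1
        obtain ⟨x, hx⟩ := h1
        have h2 : z.val - z'.val = i x := hsesW.inj hx.symm
        have h3 : p (z.val - z'.val) = 0 := by
          rw [map_sub, z.2, z'.2, sub_self]
        rw [h2] at h3
        rw [retract_pi i p hip x] at h3
        have h4 : z.val - z'.val = 0 := by rw [h2, h3, map_zero]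
        exact Subtype.ext (sub_eq_zero.mp h4)
      · intro w'
        obtain ⟨q, rfl⟩ := hsesW.surj w'
        exact ⟨mkQ q, hγapp q⟩
      · ext ξ
        constructor
        · rintro ⟨z, rfl⟩
          show γ (mkQ (jW z.val)) = 0
          rw [hγapp]
          exact hsesW.apply_apply z.val
        · intro hξ
          obtain ⟨q, rfl⟩ := Submodule.mkQ_surjective rngj ξ
          have hξ2 : γ (mkQ q) = 0 := hξ
          have h1 : π' q = 0 := (hγapp q).symm.trans hξ2
          have h2 : q ∈ LinearMap.ker π'.hom := h1
          rw [← hsesW.range_eq_ker] at h2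
          obtain ⟨w, rfl⟩ := h2
          have hmem : w - i (p w) ∈ Kp := by
            show p (w - i (p w)) = 0
            rw [map_sub, retract_pi i p hip (p w), sub_self]
          refine ⟨⟨w - i (p w), hmem⟩, ?_⟩
          show Submodule.Quotient.mk (jW (w - i (p w))) = Submodule.Quotient.mk (jW w)
          rw [Submodule.Quotient.eq]
          refine ⟨-(p w), ?_⟩
          show jW (i (-(p w))) = jW (w - i (p w)) - jW w
          rw [← map_sub]
          congr 1
          rw [map_neg]
          abel
    exact ⟨Q, Y, j, mkQ, GClass.ext α γ hsesαγ (gclass_kerp i p hip hW) hW', hQ, hsesj⟩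


lemma eqToHom_apply_symm {A B : ModuleCat.{0} R} (h : A = B) (x : ↥A) :
    eqToHom h.symm (eqToHom h x) = x := by subst h; rfl

lemma eqToHom_symm_apply {A B : ModuleCat.{0} R} (h : A = B) (x : ↥B) :
    eqToHom h (eqToHom h.symm x) = x := by subst h; rfl

theorem isGProj_of_chain {𝓛 : Set (ModuleCat.{0} R)} (M : ModuleCat.{0} R)
    (Z : ℤ → ModuleCat.{0} R)
    (hlift : ∀ n : ℤ, Lifts 𝓛 (Z n))
    (hch : ∀ j : ℤ, ∃ (E : ModuleCat.{0} R) (a : Z (j+1) ⟶ E) (b : E ⟶ Z j),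
      Projective E ∧ SES a b)
    (hM : Nonempty (M ≅ Z 0)) : IsGProj 𝓛 M := by
  choose E ιf πf hproj hses using hch
  have ιinj : ∀ j, Function.Injective (ιf j) := fun j => (hses j).inj
  have πsurj : ∀ j, Function.Surjective (πf j) := fun j => (hses j).surj
  let Cplx : ChainComplex (ModuleCat.{0} R) ℤ :=
    { X := E
      d := fun i j => if h : j + 1 = i then
          eqToHom (congrArg E h.symm) ≫ πf (j+1) ≫ ιf j else 0
      shape := fun i j h => dif_neg h
      d_comp_d' := by
        intro i j k hij hjk
        have hij' : j + 1 = i := hij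
        have hjk' : k + 1 = j := hjk
        subst hij'
        subst hjk'
        show (if h : k + 1 + 1 = k + 1 + 1 then
            eqToHom (congrArg E h.symm) ≫ πf (k+1+1) ≫ ιf (k+1) else 0) ≫
          (if h : k + 1 = k + 1 then
            eqToHom (congrArg E h.symm) ≫ πf (k+1) ≫ ιf k else 0) = 0
        rw [dif_pos rfl, dif_pos rfl]
        simp only [eqToHom_refl, Category.id_comp, Category.assoc]
        rw [← Category.assoc (ιf (k+1)) (πf (k+1)) (ιf k)]
        rw [(hses (k+1)).w]
        simp }
  have dL : ∀ j : ℤ, Cplx.d (j+1) j = πf (j+1) ≫ ιf j := by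
    intro j
    show (if h : j + 1 = j + 1 then
        eqToHom (congrArg E h.symm) ≫ πf (j+1) ≫ ιf j else 0) = _
    rw [dif_pos rfl]
    simp [eqToHom_refl]
  have dD : ∀ (i j : ℤ) (h : j + 1 = i), Cplx.d i j =
      eqToHom (congrArg E h.symm) ≫ πf (j+1) ≫ ιf j := by
    intro i j h
    exact dif_pos h
  have ιcast : ∀ (a b : ℤ) (h : a = b) (z : ↥(Z (a+1))),
      ιf b (eqToHom (show Z (a+1) = Z (b+1) by rw [h]) z) =
        eqToHom (congrArg E h) (ιf a z) := by
    intro a b h z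
    subst h
    simp
  have πcast2 : ∀ (a b : ℤ) (h : a = b) (T : ModuleCat.{0} R) (u : Z b ⟶ T),
      πf a ≫ eqToHom (congrArg Z h) ≫ u = eqToHom (congrArg E h) ≫ πf b ≫ u := by
    intro a b h T u
    subst h
    simp
  have hacyc : IsTotallyAcyclicWrt 𝓛 Cplx := by
    refine ⟨fun n => hproj n, ?_, ?_⟩
    · intro n
      refine ShortComplex.exact_of_iso (Cplx.isoSc' (n+1) n (n-1)
        (ChainComplex.prev ℤ n) (ChainComplex.next ℤ n)).symm ?_
      rw [ShortComplex.moduleCat_exact_iff]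
      intro x hx
      have h1 : (n-1) + 1 = n := by omega
      have hxd : Cplx.d n (n-1) x = 0 := hx
      rw [dD n (n-1) h1] at hxd
      have hx' : ιf (n-1) (πf ((n-1)+1) (eqToHom (congrArg E h1.symm) x)) = 0 := hxd
      have h2 : πf ((n-1)+1) (eqToHom (congrArg E h1.symm) x) = 0 := by
        apply ιinj (n-1)
        rw [hx', map_zero]
      have h3 : eqToHom (congrArg E h1.symm) x ∈ LinearMap.ker (πf ((n-1)+1)).hom := h2
      rw [← (hses ((n-1)+1)).range_eq_ker] at h3
      obtain ⟨z, hz⟩ := h3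
      obtain ⟨y, hy⟩ := πsurj (n+1) (eqToHom (show Z ((n-1)+1+1) = Z (n+1) by rw [h1]) z)
      refine ⟨y, ?_⟩
      show Cplx.d (n+1) n y = x
      rw [dL n]
      show ιf n (πf (n+1) y) = x
      rw [hy, ιcast ((n-1)+1) n h1 z, hz]
      exact eqToHom_symm_apply (congrArg E h1) x
    · intro T hT n g hg
      rw [dL n, Category.assoc] at hg
      haveI : Epi (πf (n+1)) := (ModuleCat.epi_iff_surjective _).mpr (πsurj (n+1))
      have hι : ιf n ≫ g = 0 := by
        apply (cancel_epi (πf (n+1))).mp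
        rw [hg, comp_zero]
      have hker : LinearMap.ker (πf n).hom ≤ LinearMap.ker g.hom := by
        intro e he
        have he' : e ∈ LinearMap.ker (πf n).hom := he
        rw [← (hses n).range_eq_ker] at he'
        obtain ⟨z, rfl⟩ := he'
        show g (ιf n z) = 0
        have := ConcreteCategory.congr_hom hι z
        simpa using this
      obtain ⟨gbar, hgbar⟩ := descend (πf n) g (πsurj n) hker
      have h1 : (n-1) + 1 = n := by omega
      obtain ⟨h, hh⟩ := hlift (n-1) T hT (Z ((n-1)+1)) (E (n-1)) (ιf (n-1)) (πf (n-1))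
        (hses (n-1)) (eqToHom (congrArg Z h1) ≫ gbar)
      refine ⟨h, ?_⟩
      rw [dD n (n-1) h1]
      simp only [Category.assoc]
      rw [hh]
      rw [πcast2 ((n-1)+1) n h1 T gbar]
      rw [eqToHom_trans_assoc, eqToHom_refl, Category.id_comp]
      exact hgbar
  -- identify M with the kernel at -1
  have h1 : (-1-1) + 1 = (-1 : ℤ) := by omega
  haveI : Mono (ιf (-1-1)) := (ModuleCat.mono_iff_injective _).mpr (ιinj (-1-1))
  obtain ⟨w, hSE⟩ := hses ((-1-1)+1)
  haveI := hSE.mono_f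
  let iso4 : Z ((-1-1)+1+1) ≅ kernel (πf ((-1-1)+1)) :=
    IsLimit.conePointUniqueUpToIso hSE.exact.fIsKernel
      (limit.isLimit (parallelPair (πf ((-1-1)+1)) 0))
  let iso3 : kernel (πf ((-1-1)+1) ≫ ιf (-1-1)) ≅ kernel (πf ((-1-1)+1)) :=
    kernelCompMono _ _
  let iso2 : kernel (eqToHom (congrArg E h1.symm) ≫ πf ((-1-1)+1) ≫ ιf (-1-1)) ≅
      kernel (πf ((-1-1)+1) ≫ ιf (-1-1)) :=
    kernelIsIsoComp _ _
  let iso1 : kernel (Cplx.d (-1) (-1-1)) ≅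
      kernel (eqToHom (congrArg E h1.symm) ≫ πf ((-1-1)+1) ≫ ιf (-1-1)) :=
    eqToIso (congrArg (fun q : E (-1) ⟶ E (-1-1) => kernel q) (dD (-1) (-1-1) h1))
  let iso5 : Z 0 ≅ Z ((-1-1)+1+1) := eqToIso (congrArg Z (by omega))
  exact ⟨Cplx, hacyc, -1, ⟨hM.some ≪≫ iso5 ≪≫ iso4 ≪≫ iso3.symm ≪≫ iso2.symm ≪≫ iso1.symm⟩⟩


lemma exists_chain_congr {Z1 Z1' Z0 Z0' : ModuleCat.{0} R} (h1 : Z1 = Z1') (h0 : Z0 = Z0')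
    (H : ∃ (E : ModuleCat.{0} R) (a : Z1 ⟶ E) (b : E ⟶ Z0), Projective E ∧ SES a b) :
    ∃ (E : ModuleCat.{0} R) (a : Z1' ⟶ E) (b : E ⟶ Z0'), Projective E ∧ SES a b := by
  subst h1; subst h0; exact H

theorem isGProj_of_sgp_retract {𝓛 : Set (ModuleCat.{0} R)} {𝓐 : Set (ModuleCat.{0} Rᵐᵒᵖ)}
    (hdp : CompleteDualityPair 𝓛 𝓐) (M G : ModuleCat.{0} R)
    (hG : IsSGProj 𝓛 G) (i : M ⟶ G) (p : G ⟶ M) (hip : i ≫ p = 𝟙 M) :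
    IsGProj 𝓛 M := by
  obtain ⟨P, f, hP, ⟨w, hex⟩, hlift₀, ⟨eG⟩⟩ := hG
  have hff : ∀ x : ↥P, f (f x) = 0 := fun x => by
    have := ConcreteCategory.congr_hom w x
    simpa using this
  have hrk : LinearMap.range f.hom = LinearMap.ker f.hom :=
    (ShortComplex.moduleCat_exact_iff_range_eq_ker (ShortComplex.mk f f w)).mp hex
  let K := LinearMap.ker f.hom
  let W₀ := ModuleCat.of R ↥K
  let ι₀ : W₀ ⟶ P := ModuleCat.ofHom K.subtype
  let π₀ : P ⟶ W₀ := ModuleCat.ofHom (LinearMap.codRestrict K f.hom (fun x => hff x))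
  have hses₀ : SES ι₀ π₀ := by
    rw [ses_iff]
    refine ⟨Subtype.val_injective, ?_, ?_⟩
    · rintro ⟨y, hy⟩
      have : y ∈ LinearMap.range f.hom := by rw [hrk]; exact hy
      obtain ⟨x, hx⟩ := this
      exact ⟨x, Subtype.ext hx⟩
    · ext x
      constructor
      · rintro ⟨z, rfl⟩
        show π₀ z.val = 0
        apply Subtype.ext
        show f z.val = 0
        exact z.2
      · intro hx
        have h1 : f x = 0 := congrArg Subtype.val hx
        exact ⟨⟨x, h1⟩, rfl⟩
  have hext₀ : ∀ L ∈ 𝓛, ∀ ψ : W₀ ⟶ L, ∃ h : P ⟶ L, ι₀ ≫ h = ψ := by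
    intro L hL ψ
    have hfg : f ≫ (π₀ ≫ ψ) = 0 := by
      ext x
      show ψ (π₀ (f x)) = 0
      have : π₀ (f x) = 0 := by
        apply Subtype.ext
        exact hff x
      rw [this, map_zero]
    obtain ⟨h, hh⟩ := hlift₀ L hL (π₀ ≫ ψ) hfg
    refine ⟨h, ?_⟩
    ext z
    show h z.val = ψ z
    have h1 : z.val ∈ LinearMap.range f.hom := by rw [hrk]; exact z.2
    obtain ⟨x, hx⟩ := h1
    have h2 : h (f x) = ψ (π₀ x) := by
      have := ConcreteCategory.congr_hom hh x
      simpa using this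
    have h3 : π₀ x = z := by
      apply Subtype.ext
      exact hx
    rw [← hx, h2, h3]
  -- M is a retract of W₀
  have hM0 : GClass W₀ M := by
    refine GClass.retract (i ≫ eG.hom ≫ (ModuleCat.kernelIsoKer f).hom)
      ((ModuleCat.kernelIsoKer f).inv ≫ eG.inv ≫ p) ?_ GClass.base
    simp only [Category.assoc, Iso.hom_inv_id_assoc]
    exact hip
  -- zig-zag
  choose Yl Ql al bl hYl hQl hsl using gclass_cover ι₀ π₀ hses₀ hP
  choose Qr Yr ar br hYr hQr hsr using gclass_cocover hdp ι₀ π₀ hses₀ hP hext₀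
  let Lseq : ℕ → {X : ModuleCat.{0} R // GClass W₀ X} := fun n =>
    Nat.rec ⟨M, hM0⟩ (fun _ prev => ⟨Yl prev.1 prev.2, hYl prev.1 prev.2⟩) n
  let Rseq : ℕ → {X : ModuleCat.{0} R // GClass W₀ X} := fun n =>
    Nat.rec ⟨M, hM0⟩ (fun _ prev => ⟨Yr prev.1 prev.2, hYr prev.1 prev.2⟩) n
  let Z : ℤ → ModuleCat.{0} R := fun n =>
    if 0 ≤ n then (Lseq n.toNat).1 else (Rseq (-n).toNat).1
  have hZpos : ∀ n : ℤ, 0 ≤ n → Z n = (Lseq n.toNat).1 := fun n h => if_pos h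
  have hZneg : ∀ n : ℤ, ¬ 0 ≤ n → Z n = (Rseq (-n).toNat).1 := fun n h => if_neg h
  have hZG : ∀ n : ℤ, GClass W₀ (Z n) := by
    intro n
    by_cases h : 0 ≤ n
    · rw [hZpos n h]; exact (Lseq n.toNat).2
    · rw [hZneg n h]; exact (Rseq (-n).toNat).2
  refine isGProj_of_chain M Z
    (fun n => gclass_lifts ι₀ π₀ hses₀ hP hext₀ (Z n) (hZG n)) ?_ ⟨(eqToIso (hZpos 0 le_rfl)).symm⟩
  intro j
  by_cases hj : 0 ≤ j
  · -- positive side: use the covers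
    have e1 : (j+1).toNat = j.toNat + 1 := by omega
    have h1 : Z (j+1) = Yl (Lseq j.toNat).1 (Lseq j.toNat).2 := by
      rw [hZpos (j+1) (by omega), e1]
    have h0 : Z j = (Lseq j.toNat).1 := hZpos j hj
    exact exists_chain_congr h1.symm h0.symm
      ⟨Ql (Lseq j.toNat).1 (Lseq j.toNat).2, al _ _, bl _ _, hQl _ _, hsl _ _⟩
  · -- negative side: use the cocovers
    have e1 : (-j).toNat = (-(j+1)).toNat + 1 := by omega
    have h0 : Z j = Yr (Rseq (-(j+1)).toNat).1 (Rseq (-(j+1)).toNat).2 := by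
      rw [hZneg j hj, e1]
    have h1 : Z (j+1) = (Rseq (-(j+1)).toNat).1 := by
      by_cases hj1 : 0 ≤ j + 1
      · have e2 : j + 1 = 0 := by omega
        rw [e2]
        show Z 0 = (Rseq (-(0:ℤ)).toNat).1
        rw [hZpos 0 le_rfl]
        rfl
      · exact hZneg (j+1) hj1
    exact exists_chain_congr h1.symm h0.symm
      ⟨Qr (Rseq (-(j+1)).toNat).1 (Rseq (-(j+1)).toNat).2, ar _ _, br _ _, hQr _ _, hsr _ _⟩


lemma toModule_component (Mf : ℤ → Type) [∀ k, AddCommGroup (Mf k)] [∀ k, Module R (Mf k)]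
    (φ : ∀ k : ℤ, Mf k →ₗ[R] Mf (k-1)) (x : ⨁ k, Mf k) (i : ℤ) :
    DirectSum.component R ℤ Mf (i-1)
      (DirectSum.toModule R ℤ (⨁ k, Mf k)
        (fun k => (DirectSum.lof R ℤ Mf (k-1)).comp (φ k)) x) =
    φ i (DirectSum.component R ℤ Mf i x) := by
  classical
  induction x using DirectSum.induction_on with
  | zero => simp
  | of k a =>
    rw [← DirectSum.lof_eq_of R, DirectSum.toModule_lof]
    by_cases hk : k = i
    · subst hk
      show DirectSum.component R ℤ Mf (k-1) (DirectSum.lof R ℤ Mf (k-1) (φ k a)) =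
        φ k (DirectSum.component R ℤ Mf k (DirectSum.lof R ℤ Mf k a))
      rw [DirectSum.component.lof_self, DirectSum.component.lof_self]
    · show DirectSum.component R ℤ Mf (i-1)
          ((DirectSum.lof R ℤ Mf (k-1)) (φ k a)) =
        φ i (DirectSum.component R ℤ Mf i (DirectSum.lof R ℤ Mf k a))
      rw [DirectSum.component.of, DirectSum.component.of,
        dif_neg (show ¬ (k-1) = (i-1) by omega), dif_neg hk, map_zero]
  | add x y hx hy =>
    rw [map_add, map_add, hx, hy, map_add, map_add]

theorem gproj_summand_of_sgp {𝓛 : Set (ModuleCat.{0} R)} (M : ModuleCat.{0} R)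
    (hM : IsGProj 𝓛 M) :
    ∃ (G : ModuleCat.{0} R) (i : M ⟶ G) (p : G ⟶ M), IsSGProj 𝓛 G ∧ i ≫ p = 𝟙 M := by
  classical
  obtain ⟨C, hC, n₀, ⟨eM⟩⟩ := hM
  let Xc : ℤ → Type := fun k => ↥(C.X k)
  let Pb := ModuleCat.of R (⨁ k, Xc k)
  let lo : ∀ k : ℤ, Xc k →ₗ[R] ↥Pb := fun k => DirectSum.lof R ℤ Xc k
  let cmp : ∀ k : ℤ, ↥Pb →ₗ[R] Xc k := fun k => DirectSum.component R ℤ Xc k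
  let F : Pb ⟶ Pb := ModuleCat.ofHom (DirectSum.toModule R ℤ ↥Pb
    (fun k => (lo (k-1)).comp (C.d k (k-1)).hom))
  have keyF : ∀ (k : ℤ) (a : Xc k), F (lo k a) = lo (k-1) (C.d k (k-1) a) := fun k a =>
    DirectSum.toModule_lof R k a
  have lof_cast : ∀ {a b : ℤ} (h : a = b) (v : Xc a),
      lo b (eqToHom (congrArg C.X h) v) = lo a v := by
    intro a b h v
    subst h
    simp
  have d_cast : ∀ (i : ℤ) {a b : ℤ} (h : a = b) (v : Xc i),
      eqToHom (congrArg C.X h) (C.d i a v) = C.d i b v := by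
    intro i a b h v
    subst h
    simp
  have keyF2 : ∀ (j : ℤ) (v : Xc (j+1)), F (lo (j+1) v) = lo j (C.d (j+1) j v) := by
    intro j v
    have h : (j+1)-1 = j := by omega
    calc F (lo (j+1) v) = lo ((j+1)-1) (C.d (j+1) ((j+1)-1) v) := keyF _ _
      _ = lo j (eqToHom (congrArg C.X h) (C.d (j+1) ((j+1)-1) v)) := (lof_cast h _).symm
      _ = lo j (C.d (j+1) j v) := by rw [d_cast (j+1) h]
  have compF : ∀ (x : ↥Pb) (i : ℤ), cmp (i-1) (F x) = C.d i (i-1) (cmp i x) :=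
    fun x i => toModule_component Xc (fun k => (C.d k (k-1)).hom) x i
  have hex2 : ∀ (i : ℤ) (v : Xc i), C.d i (i-1) v = 0 → ∃ u : Xc (i+1), C.d (i+1) i u = v := by
    intro i v hv
    have hexact := hC.exact i
    have : (C.sc' (i+1) i (i-1)).Exact := ShortComplex.exact_of_iso
      (C.isoSc' (i+1) i (i-1) (ChainComplex.prev ℤ i) (ChainComplex.next ℤ i)) hexact
    rw [ShortComplex.moduleCat_exact_iff] at this
    exact this v hv
  have hFF : F ≫ F = 0 := by
    refine ModuleCat.hom_ext (DirectSum.linearMap_ext R ?_)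
    intro k
    ext a : 1
    show F (F (lo k a)) = 0
    rw [keyF k a, keyF (k-1)]
    have h3 : C.d (k-1) ((k-1)-1) (C.d k (k-1) a) = 0 := by
      calc C.d (k-1) ((k-1)-1) (C.d k (k-1) a)
          = (C.d k (k-1) ≫ C.d (k-1) ((k-1)-1)) a := rfl
        _ = (0 : C.X k ⟶ C.X ((k-1)-1)) a := by rw [C.d_comp_d]
        _ = 0 := rfl
    rw [h3, map_zero]
  have hexFF : (ShortComplex.mk F F hFF).Exact := by
    rw [ShortComplex.moduleCat_exact_iff]
    intro x hx
    have hx0 : F x = 0 := hx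
    have hcyc : ∀ i : ℤ, C.d i (i-1) (cmp i x) = 0 := by
      intro i
      have h4 := compF x i
      rw [hx0, map_zero] at h4
      exact h4.symm
    choose u hu using fun i => hex2 i (cmp i x) (hcyc i)
    refine ⟨∑ j ∈ DFinsupp.support x, lo (j+1) (u j), ?_⟩
    show F (∑ j ∈ DFinsupp.support x, lo (j+1) (u j)) = x
    rw [map_sum]
    have hsummand : ∀ j : ℤ, F (lo (j+1) (u j)) = lo j (cmp j x) := by
      intro j
      rw [keyF2 j (u j), hu j]
    rw [Finset.sum_congr rfl (fun j _ => hsummand j)]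
    exact DirectSum.sum_support_of x
  have hFhom : ∀ T ∈ 𝓛, ∀ g : Pb ⟶ T, F ≫ g = 0 → ∃ h : Pb ⟶ T, F ≫ h = g := by
    intro T hT g hg
    have claimA : ∀ n : ℤ, C.d (n+1) n ≫ (ModuleCat.ofHom (g.hom.comp (lo n) : Xc n →ₗ[R] ↥T) :
        C.X n ⟶ T) = 0 := by
      intro n
      ext a
      show g (lo n (C.d (n+1) n a)) = 0
      rw [← keyF2 n a]
      have h5 := ConcreteCategory.congr_hom hg (lo (n+1) a)
      simpa using h5
    choose hfun hfunspec using fun n => hC.homExact T hT n _ (claimA n)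
    let H : Pb ⟶ T := ModuleCat.ofHom (DirectSum.toModule R ℤ ↥T
      (fun j => (hfun (j+1)).hom.comp
        (eqToHom (congrArg C.X (show j = (j+1)-1 by omega)) : C.X j ⟶ C.X ((j+1)-1)).hom))
    refine ⟨H, ?_⟩
    refine ModuleCat.hom_ext (DirectSum.linearMap_ext R ?_)
    intro k
    ext a
    show H (F (lo k a)) = g (lo k a)
    obtain ⟨j, rfl⟩ : ∃ j, k = j + 1 := ⟨k - 1, by omega⟩
    rw [keyF2 j a]
    have h1 : H (lo j (C.d (j+1) j a)) =
        (hfun (j+1)) (eqToHom (congrArg C.X (show j = (j+1)-1 by omega)) (C.d (j+1) j a)) :=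
      DirectSum.toModule_lof R j _
    rw [h1, d_cast (j+1) (show j = (j+1)-1 by omega) a]
    have h2 := ConcreteCategory.congr_hom (hfunspec (j+1)) a
    simpa using h2
  haveI : ∀ k : ℤ, Module.Projective R (Xc k) := fun k => module_projective_of_cat (hC.projective k)
  have hdfin : Module.Projective R (Π₀ k, Xc k) := inferInstance
  have hPbproj : Projective Pb := cat_projective_of_module _ hdfin
  -- the retraction
  let d₀ := C.d n₀ (n₀ - 1)
  let Kd := LinearMap.ker d₀.hom
  let KF := LinearMap.ker F.hom
  let incl : ModuleCat.of R ↥Kd ⟶ ModuleCat.of R ↥KF := ModuleCat.ofHom (LinearMap.codRestrict KF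
    ((lo n₀).comp Kd.subtype) (fun z => by
      show F (lo n₀ z.val) = 0
      rw [keyF n₀]
      have hz : C.d n₀ (n₀-1) z.val = 0 := z.2
      rw [hz, map_zero]))
  let proj : ModuleCat.of R ↥KF ⟶ ModuleCat.of R ↥Kd := ModuleCat.ofHom (LinearMap.codRestrict Kd
    ((cmp n₀).comp KF.subtype) (fun z => by
      show C.d n₀ (n₀-1) (cmp n₀ z.val) = 0
      have h6 := compF z.val n₀
      have hz : F z.val = 0 := z.2
      rw [hz, map_zero] at h6
      exact h6.symm))
  have hinclproj : incl ≫ proj = 𝟙 (ModuleCat.of R ↥Kd) := by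
    ext z
    show cmp n₀ (lo n₀ z.val) = z.val
    exact DirectSum.component.lof_self (R := R) (ι := ℤ) (M := Xc) n₀ z.val
  refine ⟨kernel F,
    eM.hom ≫ (ModuleCat.kernelIsoKer d₀).hom ≫ incl ≫ (ModuleCat.kernelIsoKer F).inv,
    (ModuleCat.kernelIsoKer F).hom ≫ proj ≫ (ModuleCat.kernelIsoKer d₀).inv ≫ eM.inv,
    ⟨Pb, F, hPbproj, ⟨hFF, hexFF⟩, hFhom, ⟨Iso.refl _⟩⟩, ?_⟩
  simp only [Category.assoc, Iso.inv_hom_id_assoc]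
  slice_lhs 3 4 => rw [hinclproj]
  erw [Category.id_comp]
  simp

theorem stmt17
    (R : Type) [Ring R] (𝓛 : Set (ModuleCat.{0} R)) (𝓐 : Set (ModuleCat.{0} Rᵐᵒᵖ))
    (hdp : CompleteDualityPair 𝓛 𝓐) (M : ModuleCat.{0} R) :
    IsGProj 𝓛 M ↔
      ∃ (G : ModuleCat.{0} R) (i : M ⟶ G) (p : G ⟶ M),
        IsSGProj 𝓛 G ∧ i ≫ p = 𝟙 M := by
  constructor
  · intro h
    exact gproj_summand_of_sgp M h
  · rintro ⟨G, i, p, hG, hip⟩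
    exact isGProj_of_sgp_retract hdp M G hG i p hip

end DualityPaper
end
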